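/- arXiv:1611.09062 — 4 statements merged into one kernel-verified Lean document; each statement's English description precedes it below -/
import Mathlib

section
/- Let $M$ be a convex set of equivalent probability measures on a measurable space with filtration $(\mathcal{F}_m)_{m\ge 0}$, $\mathcal{F}_0$ trivial, such that the Radon–Nikodym derivative of any measure in $M$ with respect to any other lies in $[l, L]$ with $0 < l \le L < \infty$. Let $(f_m)$ be a supermartingale with respect to every measure in $M$. Suppose for some $P_1 \in M$, some $m_0 \ge 1$, and some nonnegative $\mathcal{F}_{m_0-1}$-measurable random variable $\varphi$ with $P_1(\varphi > 0) > 0$, we have $f_{m_0-1} - E^{P_1}[f_{m_0} \mid \mathcal{F}_{m_0-1}] \ge \varphi$ a.s. Then for every measure $Q = (1-\alpha)P_1 + \alpha P_2$ with $P_2 \in M$ and $0 \le \alpha \le L/(1+L)$, we have $f_{m_0-1} - E^{Q}[f_{m_0} \mid \mathcal{F}_{m_0-1}] \ge \frac{l}{1+L}\varphi$ a.s. -/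
open MeasureTheory

/-- For a supermartingale relative to a convex set of equivalent measures
with Radon–Nikodym derivatives bounded in `[l, L]`, a drop of size `φ` at time `m₀` under
`P₁` implies a drop of size `(l/(1+L))·φ` under every mixture `(1-α)P₁ + αP₂`
with `0 ≤ α ≤ L/(1+L)`. -/
theorem stmt0
    {Ω : Type*} {m0 : MeasurableSpace Ω} (ℱ : Filtration ℕ m0)
    (M : Set (Measure Ω))
    (hprob : ∀ P ∈ M, IsProbabilityMeasure P)
    (hconvex : ∀ P ∈ M, ∀ Q ∈ M, ∀ α : ℝ, 0 ≤ α → α ≤ 1 →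
      (ENNReal.ofReal (1 - α)) • P + (ENNReal.ofReal α) • Q ∈ M)
    (l L : ℝ) (hl : 0 < l) (hlL : l ≤ L)
    (hrn : ∀ P ∈ M, ∀ Q ∈ M, ∀ᵐ ω ∂Q,
      ENNReal.ofReal l ≤ P.rnDeriv Q ω ∧ P.rnDeriv Q ω ≤ ENNReal.ofReal L)
    (f : ℕ → Ω → ℝ)
    (hsup : ∀ P ∈ M, Supermartingale f ℱ P)
    (P₁ : Measure Ω) (hP₁ : P₁ ∈ M)
    (n : ℕ) (φ : Ω → ℝ)
    (hφmeas : StronglyMeasurable[ℱ n] φ)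
    (hφ0 : ∀ ω, 0 ≤ φ ω)
    (hφpos : 0 < P₁ {ω | 0 < φ ω})
    (hineq : ∀ᵐ ω ∂P₁, φ ω ≤ f n ω - (P₁[f (n + 1) | ℱ n]) ω) :
    ∀ P₂ ∈ M, ∀ α : ℝ, 0 ≤ α → α ≤ L / (1 + L) →
      ∀ᵐ ω ∂((ENNReal.ofReal (1 - α)) • P₁ + (ENNReal.ofReal α) • P₂),
        (l / (1 + L)) * φ ω ≤
          f n ω -
            (((ENNReal.ofReal (1 - α)) • P₁ + (ENNReal.ofReal α) • P₂)[f (n + 1) | ℱ n]) ω := by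
  intro P₂ hP₂ α hα0 hαL
  have hL : 0 < L := lt_of_lt_of_le hl hlL
  have h1L : 0 < 1 + L := by linarith
  have hα1 : α < 1 := lt_of_le_of_lt hαL ((div_lt_one h1L).mpr (by linarith))
  have h1α : (1:ℝ)/(1+L) ≤ 1 - α := by
    have h : L/(1+L) + 1/(1+L) = 1 := by field_simp; ring
    linarith
  set Q : Measure Ω := (ENNReal.ofReal (1 - α)) • P₁ + (ENNReal.ofReal α) • P₂ with hQdef
  have hQM : Q ∈ M := hconvex P₁ hP₁ P₂ hP₂ α hα0 hα1.le
  haveI iP₁ : IsProbabilityMeasure P₁ := hprob P₁ hP₁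
  haveI iP₂ : IsProbabilityMeasure P₂ := hprob P₂ hP₂
  haveI iQ : IsProbabilityMeasure Q := hprob Q hQM
  have sP₁ := hsup P₁ hP₁
  have sP₂ := hsup P₂ hP₂
  have sQ := hsup Q hQM
  have hmn : (ℱ n : MeasurableSpace Ω) ≤ m0 := ℱ.le n
  have hφsm : StronglyMeasurable φ := hφmeas.mono hmn
  -- integrability of φ w.r.t. P₁
  have hφP₁ : Integrable φ P₁ := by
    refine Integrable.mono' (g := fun ω => ‖f n ω - (P₁[f (n + 1)|ℱ n]) ω‖)
      (((sP₁.integrable n).sub integrable_condExp).norm)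
      hφsm.aestronglyMeasurable ?_
    filter_upwards [hineq] with ω hω
    rw [Real.norm_of_nonneg (hφ0 ω)]
    exact hω.trans (le_abs_self _)
  -- mutual absolute continuity of measures in M
  have habs : ∀ P ∈ M, ∀ P' ∈ M, P ≪ P' := by
    intro P hP P' hP'
    refine Measure.AbsolutelyContinuous.mk fun s hs h0 => ?_
    have h1 : ∫⁻ ω in s, P'.rnDeriv P ω ∂P ≤ P' s := Measure.setLIntegral_rnDeriv_le s
    rw [h0] at h1
    have hae : ∀ᵐ ω ∂P.restrict s, ENNReal.ofReal l ≤ P'.rnDeriv P ω :=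
      ae_restrict_of_ae ((hrn P' hP' P hP).mono fun ω h => h.1)
    have h2 : ∫⁻ _ω in s, ENNReal.ofReal l ∂P ≤ ∫⁻ ω in s, P'.rnDeriv P ω ∂P :=
      lintegral_mono_ae hae
    rw [setLIntegral_const] at h2
    have h3 : ENNReal.ofReal l * P s = 0 := le_antisymm (h2.trans h1) zero_le
    rcases mul_eq_zero.mp h3 with h | h
    · exact absurd (ENNReal.ofReal_eq_zero.mp h) (not_le.mpr hl)
    · exact h
  -- measures in M are bounded by L times each other
  have hle : ∀ P ∈ M, ∀ P' ∈ M, P ≤ ENNReal.ofReal L • P' := by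
    intro P hP P' hP'
    haveI := hprob P hP
    haveI := hprob P' hP'
    refine Measure.le_iff.mpr fun s hs => ?_
    have h1 : P s = ∫⁻ ω in s, P.rnDeriv P' ω ∂P' :=
      (Measure.setLIntegral_rnDeriv (habs P hP P' hP') s).symm
    have hae : ∀ᵐ ω ∂P'.restrict s, P.rnDeriv P' ω ≤ ENNReal.ofReal L :=
      ae_restrict_of_ae ((hrn P hP P' hP').mono fun ω h => h.2)
    have h2 : ∫⁻ ω in s, P.rnDeriv P' ω ∂P' ≤ ∫⁻ _ω in s, ENNReal.ofReal L ∂P' :=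
      lintegral_mono_ae hae
    rw [setLIntegral_const] at h2
    rw [Measure.smul_apply, smul_eq_mul]
    exact h1.le.trans h2
  have hQle : Q ≤ (1 + ENNReal.ofReal L) • P₁ := by
    refine Measure.le_iff.mpr fun s hs => ?_
    have h2 := Measure.le_iff.mp (hle P₂ hP₂ P₁ hP₁) s hs
    rw [Measure.smul_apply, smul_eq_mul] at h2
    have ha : ENNReal.ofReal (1-α) ≤ 1 := ENNReal.ofReal_le_one.mpr (by linarith)
    have hb : ENNReal.ofReal α ≤ 1 := ENNReal.ofReal_le_one.mpr hα1.le
    rw [hQdef]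
    simp only [Measure.add_apply, Measure.smul_apply, smul_eq_mul, add_mul, one_mul]
    calc ENNReal.ofReal (1-α) * P₁ s + ENNReal.ofReal α * P₂ s
        ≤ 1 * P₁ s + 1 * (ENNReal.ofReal L * P₁ s) := by
          exact add_le_add (mul_le_mul' ha le_rfl) (mul_le_mul' hb h2)
      _ = P₁ s + ENNReal.ofReal L * P₁ s := by rw [one_mul, one_mul]
  have hφQ : Integrable φ Q :=
    Integrable.of_measure_le_smul (by simp [ENNReal.ofReal_ne_top]) hQle hφP₁
  have hP₁Q : P₁ ≪ Q := habs P₁ hP₁ Q hQM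
  -- key comparison of integrals of φ
  have hkey : ∀ s : Set Ω, MeasurableSet s →
      l * ∫ ω in s, φ ω ∂Q ≤ ∫ ω in s, φ ω ∂P₁ := by
    intro s hs
    have hφm : Measurable fun ω => ENNReal.ofReal (φ ω) := hφsm.measurable.ennreal_ofReal
    have h1 : ∫⁻ ω in s, ENNReal.ofReal (φ ω) ∂P₁
        = ∫⁻ ω in s, P₁.rnDeriv Q ω * ENNReal.ofReal (φ ω) ∂Q := by
      conv_lhs => rw [← Measure.withDensity_rnDeriv_eq P₁ Q hP₁Q]
      rw [restrict_withDensity hs,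
        lintegral_withDensity_eq_lintegral_mul _ (Measure.measurable_rnDeriv _ _) hφm]
      rfl
    have h2 : ∫⁻ ω in s, ENNReal.ofReal l * ENNReal.ofReal (φ ω) ∂Q
        ≤ ∫⁻ ω in s, P₁.rnDeriv Q ω * ENNReal.ofReal (φ ω) ∂Q := by
      refine lintegral_mono_ae (ae_restrict_of_ae ((hrn P₁ hP₁ Q hQM).mono fun ω h => ?_))
      exact mul_le_mul_left h.1 _
    rw [lintegral_const_mul _ hφm] at h2
    rw [← h1] at h2
    have e1 : ∫ ω in s, φ ω ∂Q = (∫⁻ ω in s, ENNReal.ofReal (φ ω) ∂Q).toReal :=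
      integral_eq_lintegral_of_nonneg_ae (ae_of_all _ hφ0)
        hφsm.aestronglyMeasurable.restrict
    have e2 : ∫ ω in s, φ ω ∂P₁ = (∫⁻ ω in s, ENNReal.ofReal (φ ω) ∂P₁).toReal :=
      integral_eq_lintegral_of_nonneg_ae (ae_of_all _ hφ0)
        hφsm.aestronglyMeasurable.restrict
    have hfin : ∫⁻ ω in s, ENNReal.ofReal (φ ω) ∂P₁ ≠ ⊤ :=
      ((hasFiniteIntegral_iff_ofReal (ae_of_all _ hφ0)).mp hφP₁.integrableOn.2).ne
    rw [e1, e2, ← ENNReal.toReal_ofReal hl.le, ← ENNReal.toReal_mul]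
    exact ENNReal.toReal_mono hfin h2
  -- decomposition of integrals over Q
  have hdec : ∀ g : Ω → ℝ, Integrable g P₁ → Integrable g P₂ → ∀ s : Set Ω, MeasurableSet s →
      ∫ ω in s, g ω ∂Q = (1-α) * ∫ ω in s, g ω ∂P₁ + α * ∫ ω in s, g ω ∂P₂ := by
    intro g hg1 hg2 s hs
    rw [hQdef, Measure.restrict_add, Measure.restrict_smul, Measure.restrict_smul,
      integral_add_measure (hg1.integrableOn.smul_measure ENNReal.ofReal_ne_top)
        (hg2.integrableOn.smul_measure ENNReal.ofReal_ne_top),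
      integral_smul_measure, integral_smul_measure,
      ENNReal.toReal_ofReal (by linarith : (0:ℝ) ≤ 1-α), ENNReal.toReal_ofReal hα0,
      smul_eq_mul, smul_eq_mul]
  have hint1 : Integrable (f n) Q := sQ.integrable n
  have hint2 : Integrable (f (n+1)) Q := sQ.integrable (n+1)
  -- the set-integral inequality
  have hset : ∀ s : Set Ω, MeasurableSet[ℱ n] s →
      0 ≤ ∫ ω in s, (f n ω - (Q[f (n+1)|ℱ n]) ω - l/(1+L) * φ ω) ∂Q := by
    intro s hs
    have hs0 : MeasurableSet s := hmn s hs
    have hc : ∫ ω in s, (Q[f (n+1)|ℱ n]) ω ∂Q = ∫ ω in s, f (n+1) ω ∂Q :=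
      setIntegral_condExp hmn hint2 hs
    -- inequality under P₁
    have hP₁le : ∫ ω in s, φ ω ∂P₁ + ∫ ω in s, f (n+1) ω ∂P₁ ≤ ∫ ω in s, f n ω ∂P₁ := by
      have hc1 : ∫ ω in s, (P₁[f (n+1)|ℱ n]) ω ∂P₁ = ∫ ω in s, f (n+1) ω ∂P₁ :=
        setIntegral_condExp hmn (sP₁.integrable (n+1)) hs
      have h := setIntegral_mono_ae (s := s) hφP₁.integrableOn
        (((sP₁.integrable n).sub integrable_condExp).integrableOn) hineq
      have hcint1 : Integrable (P₁[f (n+1)|ℱ n]) P₁ := integrable_condExp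
      rw [integral_sub' (sP₁.integrable n).integrableOn
        hcint1.integrableOn, hc1] at h
      linarith
    -- inequality under P₂
    have hP₂le : ∫ ω in s, f (n+1) ω ∂P₂ ≤ ∫ ω in s, f n ω ∂P₂ :=
      sP₂.setIntegral_le (Nat.le_succ n) hs
    have hΦQ : 0 ≤ ∫ ω in s, φ ω ∂Q := setIntegral_nonneg hs0 fun ω _ => hφ0 ω
    have hkey' := hkey s hs0
    have hcintQ : Integrable (Q[f (n+1)|ℱ n]) Q := integrable_condExp
    have hsub : Integrable (fun ω => f n ω - (Q[f (n+1)|ℱ n]) ω) Q := hint1.sub hcintQ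
    have hmulφ : Integrable (fun ω => l/(1+L) * φ ω) Q := hφQ.const_mul _
    rw [integral_sub hsub.integrableOn hmulφ.integrableOn,
      integral_sub hint1.integrableOn hcintQ.integrableOn, hc,
      integral_const_mul,
      hdec (f n) (sP₁.integrable n) (sP₂.integrable n) s hs0,
      hdec (f (n+1)) (sP₁.integrable (n+1)) (sP₂.integrable (n+1)) s hs0]
    set A1 := ∫ ω in s, f n ω ∂P₁
    set B1 := ∫ ω in s, f (n+1) ω ∂P₁
    set A2 := ∫ ω in s, f n ω ∂P₂
    set B2 := ∫ ω in s, f (n+1) ω ∂P₂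
    set Φ1 := ∫ ω in s, φ ω ∂P₁
    set ΦQ := ∫ ω in s, φ ω ∂Q
    have t1 : 0 ≤ α * (A2 - B2) := mul_nonneg hα0 (by linarith)
    have t2 : (1-α) * (l*ΦQ) ≤ (1-α) * Φ1 :=
      mul_le_mul_of_nonneg_left hkey' (by linarith)
    have t3 : (1/(1+L)) * (l * ΦQ) ≤ (1-α) * (l * ΦQ) :=
      mul_le_mul_of_nonneg_right h1α (mul_nonneg hl.le hΦQ)
    have t4 : (1-α) * (Φ1 + B1) ≤ (1-α) * A1 :=
      mul_le_mul_of_nonneg_left hP₁le (by linarith)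
    have hc0 : (1/(1+L)) * (l * ΦQ) = l/(1+L) * ΦQ := by ring
    nlinarith [t1, t2, t3, t4]
  -- conclude via trimmed measure
  have hgsm : StronglyMeasurable[ℱ n]
      fun ω => f n ω - (Q[f (n+1)|ℱ n]) ω - l/(1+L) * φ ω :=
    ((sQ.stronglyAdapted n).sub stronglyMeasurable_condExp).sub (hφmeas.const_mul _)
  have hgint : Integrable (fun ω => f n ω - (Q[f (n+1)|ℱ n]) ω - l/(1+L) * φ ω) Q :=
    (hint1.sub integrable_condExp).sub (hφQ.const_mul _)
  have htrim : (0 : Ω → ℝ) ≤ᵐ[Q.trim hmn]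
      fun ω => f n ω - (Q[f (n+1)|ℱ n]) ω - l/(1+L) * φ ω := by
    refine ae_nonneg_of_forall_setIntegral_nonneg (hgint.trim hmn hgsm) fun s hs _ => ?_
    rw [← setIntegral_trim hmn hgsm hs]
    exact hset s hs
  filter_upwards [ae_le_of_ae_le_trim htrim] with ω hω
  simp only [Pi.zero_apply] at hω
  linarith
end

section
/- Let $M$ be a convex set of equivalent probability measures on $(\Omega, \mathcal{F})$ with filtration $(\mathcal{F}_m)$, and let $(f_m)_{m \ge 0}$ be a nonnegative supermartingale with respect to every $P \in M$, with $\sup_{P \in M} E^P f_m < \infty$. Suppose there exists for each $m \ge 1$ an $\mathcal{F}_m$-measurable random variable $\xi_m^0 \ge 0$ with $E^P[\xi_m^0 \mid \mathcal{F}_{m-1}] = 1$ a.s. for all $P \in M$, and such that $f_m \le f_{m-1} \xi_m^0$ a.s. Then $f$ admits an optional decomposition: setting $g_m = f_{m-1}\xi_m^0 - f_m \ge 0$, the process $N_m = f_0 + \sum_{i=1}^m f_{i-1}(\xi_i^0 - 1)$ is a martingale with respect to every $P \in M$ and $f_m = N_m - \sum_{i=1}^m g_i$. -/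
open MeasureTheory

lemma xi_integrable {Ω : Type*} {m0 : MeasurableSpace Ω} {m : MeasurableSpace Ω}
    {P : @Measure Ω m0} [IsProbabilityMeasure P] {ξ : Ω → ℝ}
    (h : P[ξ|m] =ᵐ[P] fun _ => (1 : ℝ)) : Integrable ξ P := by
  by_contra hc
  rw [condExp_of_not_integrable hc] at h
  obtain ⟨ω, hω⟩ := h.exists
  norm_num at hω

lemma mul_xi_integrable {Ω : Type*} {m0 : MeasurableSpace Ω} {m : MeasurableSpace Ω}
    (hm : m ≤ m0) {P : @Measure Ω m0} [IsProbabilityMeasure P]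
    {f ξ : Ω → ℝ} (hf0 : ∀ ω, 0 ≤ f ω) (hfm : StronglyMeasurable[m] f)
    (hfi : Integrable f P) (hξ0 : ∀ ω, 0 ≤ ξ ω) (hξm : Measurable[m0] ξ)
    (hξe : P[ξ|m] =ᵐ[P] fun _ => (1 : ℝ)) :
    Integrable (fun ω => f ω * ξ ω) P := by
  have hξi : Integrable ξ P := xi_integrable hξe
  set g : ℕ → Ω → ℝ := fun n ω => min (f ω) n with hg
  have hgm : ∀ n : ℕ, StronglyMeasurable[m] (g n) :=
    fun n => (hfm.measurable.min measurable_const).stronglyMeasurable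
  have hg0 : ∀ n ω, 0 ≤ g n ω := fun n ω => le_min (hf0 ω) (Nat.cast_nonneg n)
  have hgi : ∀ n : ℕ, Integrable (g n * ξ) P := by
    intro n
    refine hξi.bdd_mul (((hgm n).mono hm).aestronglyMeasurable) (c := n) (ae_of_all _ fun ω => ?_)
    rw [Real.norm_eq_abs, abs_of_nonneg (hg0 n ω)]
    exact min_le_right _ _
  have hkey : ∀ n : ℕ, ∫ ω, (g n * ξ) ω ∂P ≤ ∫ ω, f ω ∂P := by
    intro n
    have hpull : P[g n * ξ|m] =ᵐ[P] g n := by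
      have h1 := condExp_mul_of_stronglyMeasurable_left (hgm n) (hgi n) hξi
      filter_upwards [h1, hξe] with ω h1 h2
      rw [h1]
      simp only [Pi.mul_apply, h2, mul_one]
    have h2 : ∫ ω, (g n * ξ) ω ∂P = ∫ ω, g n ω ∂P :=
      (integral_condExp hm).symm.trans (integral_congr_ae hpull)
    rw [h2]
    have hgint : Integrable (g n) P := by
      refine hfi.mono (((hgm n).mono hm).aestronglyMeasurable) (ae_of_all _ fun ω => ?_)
      rw [Real.norm_eq_abs, abs_of_nonneg (hg0 n ω), Real.norm_eq_abs,
        abs_of_nonneg (hf0 ω)]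
      exact min_le_left _ _
    exact integral_mono hgint hfi fun ω => min_le_left _ _
  refine ⟨(((hfm.mono hm).measurable.mul hξm).aestronglyMeasurable), ?_⟩
  rw [hasFiniteIntegral_iff_ofReal (ae_of_all _ fun ω => mul_nonneg (hf0 ω) (hξ0 ω))]
  have hsup : (fun ω => ENNReal.ofReal (f ω * ξ ω)) =
      fun ω => ⨆ n : ℕ, ENNReal.ofReal ((g n * ξ) ω) := by
    funext ω
    refine le_antisymm ?_ (iSup_le fun n => ENNReal.ofReal_le_ofReal
      (mul_le_mul_of_nonneg_right (min_le_left _ _) (hξ0 ω)))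
    refine le_iSup_of_le ⌈f ω⌉₊ (le_of_eq ?_)
    simp only [Pi.mul_apply, hg]
    rw [min_eq_left (Nat.le_ceil _)]
  rw [hsup, lintegral_iSup]
  · refine lt_of_le_of_lt (iSup_le fun n => ?_) (ENNReal.ofReal_lt_top (r := ∫ ω, f ω ∂P))
    rw [← ofReal_integral_eq_lintegral_ofReal (hgi n)
      (ae_of_all _ fun ω => mul_nonneg (hg0 n ω) (hξ0 ω))]
    exact ENNReal.ofReal_le_ofReal (hkey n)
  · exact fun n => ENNReal.measurable_ofReal.comp
      ((((hgm n).mono hm).measurable.mul hξm))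
  · intro a b hab ω
    exact ENNReal.ofReal_le_ofReal (mul_le_mul_of_nonneg_right
      (min_le_min le_rfl (Nat.cast_le.2 hab)) (hξ0 ω))

/-- If a nonnegative supermartingale `f` relative to a convex set `M` of
equivalent measures admits for each `m ≥ 1` a nonnegative `ℱ m`-measurable `ξ⁰_m` with
`E^P[ξ⁰_m | ℱ_{m-1}] = 1` for all `P ∈ M` and `f_m ≤ f_{m-1} ξ⁰_m` a.s., then
`N_m = f_0 + ∑_{i=1}^m f_{i-1}(ξ⁰_i - 1)` is a martingale relative to every `P ∈ M`,
and `f_m = N_m - ∑_{i=1}^m g_i` with nonnegative increments `g_i = f_{i-1}ξ⁰_i - f_i`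
(an optional decomposition). -/
theorem stmt10
    {Ω : Type*} {m0 : MeasurableSpace Ω} (ℱ : Filtration ℕ m0)
    (M : Set (Measure Ω))
    (hprob : ∀ P ∈ M, IsProbabilityMeasure P)
    (hconvex : ∀ P ∈ M, ∀ Q ∈ M, ∀ α : ℝ, 0 ≤ α → α ≤ 1 →
      (ENNReal.ofReal (1 - α)) • P + (ENNReal.ofReal α) • Q ∈ M)
    (hequiv : ∀ P ∈ M, ∀ Q ∈ M, P ≪ Q)
    (f : ℕ → Ω → ℝ) (hf0 : ∀ m ω, 0 ≤ f m ω)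
    (hsup : ∀ P ∈ M, Supermartingale f ℱ P)
    (hbdd : ∀ m : ℕ, ∃ C : ℝ, ∀ P ∈ M, ∫ ω, f m ω ∂P ≤ C)
    (ξ : ℕ → Ω → ℝ)
    (hξ0 : ∀ m ω, 0 ≤ ξ (m + 1) ω)
    (hξmeas : ∀ m : ℕ, StronglyMeasurable[ℱ (m + 1)] (ξ (m + 1)))
    (hξexp : ∀ P ∈ M, ∀ m : ℕ, P[ξ (m + 1) | ℱ m] =ᵐ[P] fun _ => (1 : ℝ))
    (hdom : ∀ P ∈ M, ∀ m : ℕ, ∀ᵐ ω ∂P, f (m + 1) ω ≤ f m ω * ξ (m + 1) ω) :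
    (∀ P ∈ M,
      Martingale
        (fun m ω => f 0 ω + ∑ i ∈ Finset.range m, f i ω * (ξ (i + 1) ω - 1)) ℱ P) ∧
    (∀ P ∈ M, ∀ m : ℕ, ∀ᵐ ω ∂P, 0 ≤ f m ω * ξ (m + 1) ω - f (m + 1) ω) ∧
    (∀ m : ℕ, ∀ ω,
      f m ω =
        (f 0 ω + ∑ i ∈ Finset.range m, f i ω * (ξ (i + 1) ω - 1)) -
          ∑ i ∈ Finset.range m, (f i ω * ξ (i + 1) ω - f (i + 1) ω)) := by
  refine ⟨?_, ?_, ?_⟩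
  · intro P hP
    haveI := hprob P hP
    have fi : ∀ i, Integrable (f i) P := (hsup P hP).integrable
    have fmeas : ∀ i, StronglyMeasurable[ℱ i] (f i) := (hsup P hP).stronglyAdapted
    have hξi : ∀ i : ℕ, Integrable (ξ (i + 1)) P := fun i => xi_integrable (hξexp P hP i)
    have prodInt : ∀ i, Integrable (f i * ξ (i + 1)) P := fun i =>
      mul_xi_integrable (ℱ.le i) (hf0 i) (fmeas i) (fi i) (hξ0 i)
        (((hξmeas i).mono (ℱ.le (i + 1))).measurable) (hξexp P hP i)
    have dInt : ∀ i, Integrable (fun ω => f i ω * (ξ (i + 1) ω - 1)) P := by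
      intro i
      have h : (fun ω => f i ω * (ξ (i + 1) ω - 1)) =
          fun ω => (f i * ξ (i + 1)) ω - f i ω := by funext ω; simp [Pi.mul_apply]; ring
      rw [h]
      exact (prodInt i).sub (fi i)
    have Nint : ∀ m : ℕ, Integrable
        (fun ω => f 0 ω + ∑ i ∈ Finset.range m, f i ω * (ξ (i + 1) ω - 1)) P := fun m =>
      (fi 0).add (integrable_finset_sum _ fun i _ => dInt i)
    have Nmeas : ∀ m : ℕ, StronglyMeasurable[ℱ m]
        (fun ω => f 0 ω + ∑ i ∈ Finset.range m, f i ω * (ξ (i + 1) ω - 1)) := by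
      intro m
      have h1 : Measurable[ℱ m] (f 0) :=
        ((fmeas 0).mono (ℱ.mono (Nat.zero_le m))).measurable
      have h2 : Measurable[ℱ m]
          (fun ω => ∑ i ∈ Finset.range m, f i ω * (ξ (i + 1) ω - 1)) := by
        refine Finset.measurable_sum _ fun i hi => ?_
        have hi' : i + 1 ≤ m := Finset.mem_range.mp hi
        exact (((fmeas i).mono (ℱ.mono (Nat.le_of_succ_le hi'))).measurable.mul
          ((((hξmeas i).mono (ℱ.mono hi')).measurable).sub measurable_const))
      exact (h1.add h2).stronglyMeasurable
    refine martingale_nat (fun m => (Nmeas m)) Nint ?_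
    intro n
    have hstep : (fun ω => f 0 ω + ∑ i ∈ Finset.range (n + 1), f i ω * (ξ (i + 1) ω - 1)) =
        (fun ω => f 0 ω + ∑ i ∈ Finset.range n, f i ω * (ξ (i + 1) ω - 1)) +
          fun ω => f n ω * (ξ (n + 1) ω - 1) := by
      funext ω; simp only [Pi.add_apply]; rw [Finset.sum_range_succ]; ring
    rw [hstep]
    have hadd := condExp_add (μ := P) (m := ℱ n) (Nint n) (dInt n)
    have hN : P[(fun ω => f 0 ω + ∑ i ∈ Finset.range n, f i ω * (ξ (i + 1) ω - 1))|ℱ n] =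
        fun ω => f 0 ω + ∑ i ∈ Finset.range n, f i ω * (ξ (i + 1) ω - 1) :=
      condExp_of_stronglyMeasurable (ℱ.le n) (Nmeas n) (Nint n)
    have hd : P[(fun ω => f n ω * (ξ (n + 1) ω - 1))|ℱ n] =ᵐ[P] fun _ => (0 : ℝ) := by
      have heq : (fun ω => f n ω * (ξ (n + 1) ω - 1)) =
          f n * ξ (n + 1) - f n := by
        funext ω; simp only [Pi.sub_apply, Pi.mul_apply]; ring
      rw [heq]
      have hsub := condExp_sub (μ := P) (m := ℱ n) (prodInt n) (fi n)
      have hmul := condExp_mul_of_stronglyMeasurable_left (μ := P) (fmeas n) (prodInt n) (hξi n)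
      have hNN : P[f n|ℱ n] = f n :=
        condExp_of_stronglyMeasurable (ℱ.le n) (fmeas n) (fi n)
      filter_upwards [hsub, hmul, hξexp P hP n] with ω h1 h2 h3
      rw [h1]
      simp only [Pi.sub_apply, h2, Pi.mul_apply, h3, mul_one, hNN, sub_self]
    filter_upwards [hadd, hd] with ω h1 h2
    rw [h1]
    simp only [Pi.add_apply, hN, h2, add_zero]
  · intro P hP m
    filter_upwards [hdom P hP m] with ω h
    linarith
  · intro m ω
    induction m with
    | zero => simp
    | succ n ih =>
      rw [Finset.sum_range_succ, Finset.sum_range_succ]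
      linarith
end

section
/- The set $K_N^1 = \{\sum_{k=1}^N \langle H_k, S_k - S_{k-1}\rangle : H \text{ predictable, finite-valued}\}$ of outcomes of discrete-time stochastic integrals against an $\mathbb{R}^d$-valued adapted process $S$ admitting an equivalent martingale measure is closed in the space $L^0$ of finite random variables with respect to convergence in probability. -/
open MeasureTheory
open Filter Topology


section aux
variable {Ω : Type*}

private lemma meas_sInf {m : MeasurableSpace Ω} {p : ℕ → Ω → Prop}
    (hp : ∀ i, MeasurableSet {ω | p i ω}) :
    Measurable (fun ω => sInf {i | p i ω}) := by
  apply measurable_to_countable'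
  intro j
  have : (fun ω => sInf {i | p i ω}) ⁻¹' {j} =
      ({ω | p j ω} ∩ ⋂ k < j, {ω | p k ω}ᶜ) ∪
      (if j = 0 then ⋂ i, {ω | p i ω}ᶜ else ∅) := by
    ext ω
    simp only [Set.mem_preimage, Set.mem_singleton_iff, Set.mem_union, Set.mem_inter_iff,
      Set.mem_setOf_eq, Set.mem_iInter, Set.mem_compl_iff]
    constructor
    · intro h
      by_cases hne : {i | p i ω}.Nonempty
      · left
        have hmem := Nat.sInf_mem hne
        rw [h] at hmem
        refine ⟨hmem, fun k hk hpk => ?_⟩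
        have := Nat.sInf_le (s := {i | p i ω}) hpk
        omega
      · right
        rw [Set.not_nonempty_iff_eq_empty] at hne
        have hj0 : j = 0 := by
          rw [← h, hne, Nat.sInf_empty]
        simp only [hj0, if_true, Set.mem_iInter, Set.mem_compl_iff, Set.mem_setOf_eq]
        intro i hpi
        have h2 : i ∈ {i | p i ω} := hpi
        rw [hne] at h2
        exact h2
    · rintro (⟨hpj, hlt⟩ | hemp)
      · refine le_antisymm (Nat.sInf_le hpj) ?_
        by_contra hc
        push_neg at hc
        have hne : {i | p i ω}.Nonempty := ⟨j, hpj⟩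
        have hmem := Nat.sInf_mem hne
        exact hlt _ hc hmem
      · by_cases hj : j = 0
        · simp only [hj, if_true, Set.mem_iInter, Set.mem_compl_iff, Set.mem_setOf_eq] at hemp
          have he : {i | p i ω} = ∅ := by
            ext i; simp only [Set.mem_setOf_eq, Set.mem_empty_iff_false, iff_false]
            exact hemp i
          simp [he, hj, Nat.sInf_empty]
        · simp [hj] at hemp
  rw [this]
  apply MeasurableSet.union
  · exact (hp j).inter (MeasurableSet.iInter fun k => MeasurableSet.iInter fun _ => (hp k).compl)
  · split
    · exact MeasurableSet.iInter fun i => (hp i).compl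
    · exact MeasurableSet.empty

private lemma meas_comp_nat {m : MeasurableSpace Ω} {β : Type*} [MeasurableSpace β]
    {u : ℕ → Ω → β} (hu : ∀ n, Measurable (u n)) {τ : Ω → ℕ} (hτ : Measurable τ) :
    Measurable fun ω => u (τ ω) ω := by
  have h1 : Measurable (fun q : Ω × ℕ => u q.2 q.1) :=
    measurable_from_prod_countable_left (fun n => hu n)
  exact h1.comp (measurable_id.prodMk hτ)

end aux

section sel
variable {E : Type*} [NormedAddCommGroup E] [ProperSpace E]

private lemma exists_cluster {g : ℕ → E} {c : E} {r : ℝ}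
    (h : ∀ N, ∃ n, N ≤ n ∧ ‖g n - c‖ ≤ r) :
    ∃ x, ‖x - c‖ ≤ r ∧ ∀ ε > 0, ∀ N, ∃ n, N ≤ n ∧ ‖g n - x‖ < ε := by
  set s := Metric.closedBall c r with hs_def
  have hs : IsCompact s := isCompact_closedBall c r
  have hne : (Filter.map g atTop ⊓ 𝓟 s).NeBot := by
    rw [inf_principal_neBot_iff]
    intro U hU
    rw [mem_map, mem_atTop_sets] at hU
    obtain ⟨N, hN⟩ := hU
    obtain ⟨n, hn1, hn2⟩ := h N
    exact ⟨g n, hN n hn1, by simpa [hs_def, Metric.mem_closedBall, dist_eq_norm] using hn2⟩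
  haveI := hne
  obtain ⟨x, hxs, hx⟩ := hs.exists_clusterPt (f := Filter.map g atTop ⊓ 𝓟 s) inf_le_right
  refine ⟨x, by simpa [hs_def, Metric.mem_closedBall, dist_eq_norm] using hxs, ?_⟩
  intro ε hε N
  have hx2 : ClusterPt x (Filter.map g atTop) := hx.mono inf_le_left
  rw [clusterPt_iff_nonempty] at hx2
  have hU : Metric.ball x ε ∈ 𝓝 x := Metric.ball_mem_nhds x hε
  have hV : g '' Set.Ici N ∈ Filter.map g atTop := by
    rw [mem_map]
    exact mem_atTop_sets.2 ⟨N, fun n hn => ⟨n, hn, rfl⟩⟩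
  obtain ⟨y, hy1, hy2⟩ := hx2 hU hV
  obtain ⟨n, hn, rfl⟩ := hy2
  exact ⟨n, hn, by simpa [Metric.mem_ball, dist_eq_norm] using hy1⟩

end sel

private lemma hsInf_mem_aux {p : ℕ → Prop} {j0 : ℕ} (hex : ∃ i, p i) :
    sInf {i | p i ∨ (∀ i', ¬ p i') ∧ i = j0} ∈ {i | p i} := by
  have hset : {i | p i ∨ (∀ i', ¬ p i') ∧ i = j0} = {i | p i} := by
    ext i
    simp only [Set.mem_setOf_eq, or_iff_left_iff_imp]
    rintro ⟨hall, -⟩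
    obtain ⟨i0, hi0⟩ := hex
    exact absurd hi0 (hall i0)
  rw [hset]
  exact Nat.sInf_mem hex

private lemma hsInf_junk_aux {p : ℕ → Prop} {j0 : ℕ} (hall : ∀ i, ¬ p i) :
    sInf {i | p i ∨ (∀ i', ¬ p i') ∧ i = j0} = j0 := by
  have hset : {i | p i ∨ (∀ i', ¬ p i') ∧ i = j0} = {j0} := by
    ext i
    simp only [Set.mem_setOf_eq, Set.mem_singleton_iff]
    constructor
    · rintro (h | ⟨-, h⟩)
      · exact absurd h (hall i)
      · exact h
    · intro h; exact Or.inr ⟨hall, h⟩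
  rw [hset, csInf_singleton]

private lemma cluster_selection {Ω : Type*} [mΩ : MeasurableSpace Ω] {d : ℕ}
    (f : ℕ → Ω → (Fin d → ℝ)) (hf : ∀ n, Measurable (f n)) :
    ∃ (τ : ℕ → Ω → ℕ) (F : Ω → Fin d → ℝ),
      (∀ k, Measurable (τ k)) ∧ Measurable F ∧
      (∀ ω, StrictMono (fun k => τ k ω)) ∧
      (∀ ω, (∃ C : ℕ, ∀ N, ∃ n, N ≤ n ∧ ‖f n ω‖ ≤ (C : ℝ)) →
        Tendsto (fun k => f (τ k ω) ω) atTop (𝓝 (F ω))) := by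
  classical
  set e : ℕ → (Fin d → ℝ) := TopologicalSpace.denseSeq (Fin d → ℝ) with he_def
  have he : DenseRange e := TopologicalSpace.denseRange_denseSeq (Fin d → ℝ)
  set Q : ℕ → ℕ → Ω → Prop :=
    fun i m ω => ∀ N, ∃ n, N ≤ n ∧ ‖f n ω - e i‖ ≤ (2:ℝ)⁻¹ ^ m with hQ_def
  -- measurability of Q-sets
  have hQmeas : ∀ i m, MeasurableSet {ω | Q i m ω} := by
    intro i m
    rw [hQ_def]
    simp only [Set.setOf_forall, Set.setOf_exists]
    refine MeasurableSet.iInter fun N => MeasurableSet.iUnion fun n => ?_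
    rw [Set.setOf_and]
    exact (MeasurableSet.const _).inter
      (measurableSet_le (((hf n).sub measurable_const).norm) measurable_const)
  -- step existence
  have hstep : ∀ ω m j, Q j m ω →
      ∃ i, ‖e i - e j‖ ≤ 3 * (2:ℝ)⁻¹ ^ (m+1) ∧ Q i (m+1) ω := by
    intro ω m j hQj
    obtain ⟨x, hx1, hx2⟩ := exists_cluster (g := fun n => f n ω) (c := e j)
      (r := (2:ℝ)⁻¹ ^ m) hQj
    obtain ⟨i, hi⟩ : ∃ i, ‖e i - x‖ < (2:ℝ)⁻¹ ^ (m+2) := by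
      obtain ⟨i, hy⟩ := he.exists_dist_lt x (by positivity : (0:ℝ) < (2:ℝ)⁻¹ ^ (m+2))
      exact ⟨i, by rwa [dist_comm, dist_eq_norm] at hy⟩
    refine ⟨i, ?_, ?_⟩
    · have h1 : ‖e i - e j‖ ≤ ‖e i - x‖ + ‖x - e j‖ := norm_sub_le_norm_sub_add_norm_sub _ _ _
      have h2 : (2:ℝ)⁻¹ ^ (m+2) + (2:ℝ)⁻¹ ^ m ≤ 3 * (2:ℝ)⁻¹ ^ (m+1) := by
        ring_nf
        nlinarith [pow_pos (by norm_num : (0:ℝ) < 2⁻¹) m]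
      linarith [hi, hx1]
    · intro N
      obtain ⟨n, hn, hfn⟩ := hx2 ((2:ℝ)⁻¹ ^ (m+2)) (by positivity) N
      refine ⟨n, hn, ?_⟩
      have h1 : ‖f n ω - e i‖ ≤ ‖f n ω - x‖ + ‖x - e i‖ := norm_sub_le_norm_sub_add_norm_sub _ _ _
      have h3 : ‖x - e i‖ = ‖e i - x‖ := norm_sub_rev _ _
      have h2 : (2:ℝ)⁻¹ ^ (m+2) + (2:ℝ)⁻¹ ^ (m+2) ≤ (2:ℝ)⁻¹ ^ (m+1) := by
        ring_nf; nlinarith [pow_pos (by norm_num : (0:ℝ) < 2⁻¹) m]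
      rw [h3] at h1
      linarith [hfn, hi]
  -- base existence
  have hbase : ∀ ω, (∃ C : ℕ, ∀ N, ∃ n, N ≤ n ∧ ‖f n ω‖ ≤ (C : ℝ)) → ∃ i, Q i 0 ω := by
    intro ω ⟨C, hC⟩
    have hC' : ∀ N, ∃ n, N ≤ n ∧ ‖f n ω - 0‖ ≤ (C : ℝ) := by
      simpa using hC
    obtain ⟨x, -, hx2⟩ := exists_cluster (g := fun n => f n ω) (c := 0) (r := (C:ℝ)) hC'
    obtain ⟨i, hi⟩ : ∃ i, ‖e i - x‖ < (2:ℝ)⁻¹ := by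
      obtain ⟨i, hy⟩ := he.exists_dist_lt x (by norm_num : (0:ℝ) < 2⁻¹)
      exact ⟨i, by rwa [dist_comm, dist_eq_norm] at hy⟩
    refine ⟨i, fun N => ?_⟩
    obtain ⟨n, hn, hfn⟩ := hx2 (2:ℝ)⁻¹ (by norm_num) N
    refine ⟨n, hn, ?_⟩
    have h1 : ‖f n ω - e i‖ ≤ ‖f n ω - x‖ + ‖x - e i‖ := norm_sub_le_norm_sub_add_norm_sub _ _ _
    have h3 : ‖x - e i‖ = ‖e i - x‖ := norm_sub_rev _ _
    rw [h3] at h1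
    simp only [pow_zero]
    linarith [hfn, hi]
  -- the index sequence
  set idx : ℕ → Ω → ℕ := fun m => Nat.rec
    (fun ω => sInf {i | Q i 0 ω ∨ (∀ i', ¬ Q i' 0 ω) ∧ i = 0})
    (fun m prev ω => sInf {i | (‖e i - e (prev ω)‖ ≤ 3 * (2:ℝ)⁻¹ ^ (m+1) ∧ Q i (m+1) ω) ∨
      ((∀ i', ¬(‖e i' - e (prev ω)‖ ≤ 3 * (2:ℝ)⁻¹ ^ (m+1) ∧ Q i' (m+1) ω)) ∧ i = prev ω)}) m
    with hidx_def
  have hidx0 : ∀ ω, idx 0 ω = sInf {i | Q i 0 ω ∨ (∀ i', ¬ Q i' 0 ω) ∧ i = 0} := fun ω => rfl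
  have hidxS : ∀ m ω, idx (m+1) ω =
      sInf {i | (‖e i - e (idx m ω)‖ ≤ 3 * (2:ℝ)⁻¹ ^ (m+1) ∧ Q i (m+1) ω) ∨
      ((∀ i', ¬(‖e i' - e (idx m ω)‖ ≤ 3 * (2:ℝ)⁻¹ ^ (m+1) ∧ Q i' (m+1) ω)) ∧ i = idx m ω)} :=
    fun m ω => rfl
  -- measurability of idx
  have hemeas : Measurable e := measurable_from_top
  have hidxmeas : ∀ m, Measurable (idx m) := by
    intro m
    induction m with
    | zero =>
      apply meas_sInf
      intro i
      simp only [Set.setOf_or, Set.setOf_and, Set.setOf_forall]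
      refine (hQmeas i 0).union (MeasurableSet.inter ?_ (MeasurableSet.const _))
      exact MeasurableSet.iInter fun i' => (hQmeas i' 0).compl
    | succ m ih =>
      have hprev : Measurable (fun ω => e (idx m ω)) := hemeas.comp ih
      have hrw : idx (m+1) = fun ω =>
          sInf {i | (‖e i - e (idx m ω)‖ ≤ 3 * (2:ℝ)⁻¹ ^ (m+1) ∧ Q i (m+1) ω) ∨
            ((∀ i', ¬(‖e i' - e (idx m ω)‖ ≤ 3 * (2:ℝ)⁻¹ ^ (m+1) ∧ Q i' (m+1) ω)) ∧ i = idx m ω)} :=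
        funext fun ω => hidxS m ω
      rw [hrw]
      apply meas_sInf
      intro i
      have hb : ∀ i', MeasurableSet
          {ω | ‖e i' - e (idx m ω)‖ ≤ 3 * (2:ℝ)⁻¹ ^ (m+1) ∧ Q i' (m+1) ω} := by
        intro i'
        rw [Set.setOf_and]
        exact (measurableSet_le ((measurable_const.sub hprev).norm) measurable_const).inter
          (hQmeas i' (m+1))
      have hc : MeasurableSet {ω | i = idx m ω} := by
        have hset : {ω | i = idx m ω} = (idx m) ⁻¹' {i} := by ext ω; simp [eq_comm]
        rw [hset]
        exact ih (measurableSet_singleton i)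
      simp only [Set.setOf_or]
      refine (hb i).union ?_
      rw [Set.setOf_and, Set.setOf_forall]
      exact (MeasurableSet.iInter fun i' => (hb i').compl).inter hc
  -- invariant: Q holds along idx, on the good set
  have hinv : ∀ ω, (∃ C : ℕ, ∀ N, ∃ n, N ≤ n ∧ ‖f n ω‖ ≤ (C : ℝ)) →
      ∀ m, Q (idx m ω) m ω := by
    intro ω hA m
    induction m with
    | zero =>
      have hex := hbase ω hA
      have := hsInf_mem_aux (p := fun i => Q i 0 ω) (j0 := 0) hex
      rwa [← hidx0 ω] at this
    | succ m ih =>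
      obtain ⟨i, hi⟩ := hstep ω m (idx m ω) ih
      have := hsInf_mem_aux
        (p := fun i => ‖e i - e (idx m ω)‖ ≤ 3 * (2:ℝ)⁻¹ ^ (m+1) ∧ Q i (m+1) ω)
        (j0 := idx m ω) ⟨i, hi⟩
      rw [← hidxS m ω] at this
      exact this.2
  -- geometric chain bound, for every ω
  have hchain : ∀ ω m, dist (e (idx m ω)) (e (idx (m+1) ω)) ≤ (3/2) * (2:ℝ)⁻¹ ^ m := by
    intro ω m
    by_cases hex : ∃ i, ‖e i - e (idx m ω)‖ ≤ 3 * (2:ℝ)⁻¹ ^ (m+1) ∧ Q i (m+1) ω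
    · have hmem := hsInf_mem_aux
        (p := fun i => ‖e i - e (idx m ω)‖ ≤ 3 * (2:ℝ)⁻¹ ^ (m+1) ∧ Q i (m+1) ω)
        (j0 := idx m ω) hex
      rw [← hidxS m ω] at hmem
      have h1 : dist (e (idx m ω)) (e (idx (m+1) ω)) = ‖e (idx (m+1) ω) - e (idx m ω)‖ := by
        rw [dist_comm, dist_eq_norm]
      rw [h1]
      calc ‖e (idx (m+1) ω) - e (idx m ω)‖ ≤ 3 * (2:ℝ)⁻¹ ^ (m+1) := hmem.1
        _ = (3/2) * (2:ℝ)⁻¹ ^ m := by ring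
    · push_neg at hex
      have hj := hsInf_junk_aux
        (p := fun i => ‖e i - e (idx m ω)‖ ≤ 3 * (2:ℝ)⁻¹ ^ (m+1) ∧ Q i (m+1) ω)
        (j0 := idx m ω) (fun i hi => hex i hi.1 hi.2)
      rw [← hidxS m ω] at hj
      rw [hj]
      simp only [dist_self]
      positivity
  -- limit F
  have hcauchy : ∀ ω, ∃ x, Tendsto (fun m => e (idx m ω)) atTop (𝓝 x) := by
    intro ω
    apply cauchySeq_tendsto_of_complete
    exact cauchySeq_of_le_geometric (2:ℝ)⁻¹ (3/2) (by norm_num) (hchain ω)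
  set F : Ω → Fin d → ℝ := fun ω => (hcauchy ω).choose with hF_def
  have hFt : ∀ ω, Tendsto (fun m => e (idx m ω)) atTop (𝓝 (F ω)) :=
    fun ω => (hcauchy ω).choose_spec
  have hFdist : ∀ ω m, dist (e (idx m ω)) (F ω) ≤ 3 * (2:ℝ)⁻¹ ^ m := by
    intro ω m
    have := dist_le_of_le_geometric_of_tendsto (2:ℝ)⁻¹ (3/2) (by norm_num) (hchain ω)
      (hFt ω) m
    calc dist (e (idx m ω)) (F ω) ≤ (3/2) * (2:ℝ)⁻¹ ^ m / (1 - 2⁻¹) := this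
      _ = 3 * (2:ℝ)⁻¹ ^ m := by ring
  have hFmeas : Measurable F := by
    apply measurable_of_tendsto_metrizable (f := fun m ω => e (idx m ω))
    · exact fun m => hemeas.comp (hidxmeas m)
    · exact tendsto_pi_nhds.2 hFt
  -- the subsequence τ
  set R : ℕ → ℕ → Ω → Prop := fun k n ω => ‖f n ω - e (idx k ω)‖ ≤ (2:ℝ)⁻¹ ^ k with hR_def
  set τ : ℕ → Ω → ℕ := fun k => Nat.rec
    (fun ω => sInf {n | R 0 n ω ∨ (∀ n', ¬ R 0 n' ω) ∧ n = 0})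
    (fun k prev ω => sInf {n | (prev ω < n ∧ R (k+1) n ω) ∨
      ((∀ n', ¬(prev ω < n' ∧ R (k+1) n' ω)) ∧ n = prev ω + 1)}) k
    with hτ_def
  have hτ0 : ∀ ω, τ 0 ω = sInf {n | R 0 n ω ∨ (∀ n', ¬ R 0 n' ω) ∧ n = 0} := fun ω => rfl
  have hτS : ∀ k ω, τ (k+1) ω = sInf {n | (τ k ω < n ∧ R (k+1) n ω) ∨
      ((∀ n', ¬(τ k ω < n' ∧ R (k+1) n' ω)) ∧ n = τ k ω + 1)} := fun k ω => rfl
  have hRmeas : ∀ k n, MeasurableSet {ω | R k n ω} := by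
    intro k n
    rw [hR_def]
    exact measurableSet_le ((hf n).sub (hemeas.comp (hidxmeas k))).norm measurable_const
  have hτmeas : ∀ k, Measurable (τ k) := by
    intro k
    induction k with
    | zero =>
      apply meas_sInf
      intro n
      simp only [Set.setOf_or]
      refine (hRmeas 0 n).union ?_
      rw [Set.setOf_and, Set.setOf_forall]
      exact (MeasurableSet.iInter fun n' => (hRmeas 0 n').compl).inter (MeasurableSet.const _)
    | succ k ih =>
      have hrw : τ (k+1) = fun ω => sInf {n | (τ k ω < n ∧ R (k+1) n ω) ∨
          ((∀ n', ¬(τ k ω < n' ∧ R (k+1) n' ω)) ∧ n = τ k ω + 1)} := funext fun ω => hτS k ω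
      rw [hrw]
      apply meas_sInf
      intro n
      have hb : ∀ n', MeasurableSet {ω | τ k ω < n' ∧ R (k+1) n' ω} := by
        intro n'
        rw [Set.setOf_and]
        refine MeasurableSet.inter ?_ (hRmeas (k+1) n')
        have : {ω | τ k ω < n'} = (τ k) ⁻¹' {j | j < n'} := rfl
        rw [this]
        exact ih MeasurableSpace.measurableSet_top
      have hc : MeasurableSet {ω | n = τ k ω + 1} := by
        have : {ω | n = τ k ω + 1} = (τ k) ⁻¹' {j | n = j + 1} := rfl
        rw [this]
        exact ih MeasurableSpace.measurableSet_top
      simp only [Set.setOf_or]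
      refine (hb n).union ?_
      rw [Set.setOf_and, Set.setOf_forall]
      exact (MeasurableSet.iInter fun n' => (hb n').compl).inter hc
  have hτmono : ∀ ω, StrictMono (fun k => τ k ω) := by
    intro ω
    apply strictMono_nat_of_lt_succ
    intro k
    by_cases hex : ∃ n, τ k ω < n ∧ R (k+1) n ω
    · have hmem := hsInf_mem_aux (p := fun n => τ k ω < n ∧ R (k+1) n ω)
        (j0 := τ k ω + 1) hex
      rw [← hτS k ω] at hmem
      exact hmem.1
    · push_neg at hex
      have hj := hsInf_junk_aux (p := fun n => τ k ω < n ∧ R (k+1) n ω)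
        (j0 := τ k ω + 1) (fun n hn => hex n hn.1 hn.2)
      rw [← hτS k ω] at hj
      omega
  -- along the subsequence we stay close to e (idx k)
  have hτbound : ∀ ω, (∃ C : ℕ, ∀ N, ∃ n, N ≤ n ∧ ‖f n ω‖ ≤ (C : ℝ)) →
      ∀ k, R k (τ k ω) ω := by
    intro ω hA k
    cases k with
    | zero =>
      have hQ0 := hinv ω hA 0
      obtain ⟨n, -, hn⟩ := hQ0 0
      have hmem := hsInf_mem_aux (p := fun n => R 0 n ω) (j0 := 0) ⟨n, hn⟩
      rwa [← hτ0 ω] at hmem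
    | succ k =>
      have hQk := hinv ω hA (k+1)
      obtain ⟨n, hn1, hn2⟩ := hQk (τ k ω + 1)
      have hmem := hsInf_mem_aux (p := fun n => τ k ω < n ∧ R (k+1) n ω)
        (j0 := τ k ω + 1) ⟨n, by omega, hn2⟩
      rw [← hτS k ω] at hmem
      exact hmem.2
  -- conclusion
  refine ⟨τ, F, hτmeas, hFmeas, hτmono, ?_⟩
  intro ω hA
  rw [tendsto_iff_dist_tendsto_zero]
  apply squeeze_zero (fun k => dist_nonneg)
    (g := fun k => 4 * (2:ℝ)⁻¹ ^ k)
  · intro k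
    have h1 : dist (f (τ k ω) ω) (F ω) ≤ dist (f (τ k ω) ω) (e (idx k ω)) +
        dist (e (idx k ω)) (F ω) := dist_triangle _ _ _
    have h2 : dist (f (τ k ω) ω) (e (idx k ω)) ≤ (2:ℝ)⁻¹ ^ k := by
      rw [dist_eq_norm]
      exact hτbound ω hA k
    have h3 := hFdist ω k
    calc dist (f (τ k ω) ω) (F ω) ≤ (2:ℝ)⁻¹ ^ k + 3 * (2:ℝ)⁻¹ ^ k := by linarith
      _ = 4 * (2:ℝ)⁻¹ ^ k := by ring
  · have := tendsto_pow_atTop_nhds_zero_of_lt_one (by norm_num : (0:ℝ) ≤ 2⁻¹)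
      (by norm_num : (2:ℝ)⁻¹ < 1)
    simpa using this.const_mul 4

private def dotp {d : ℕ} (a b : Fin d → ℝ) : ℝ := ∑ j, a j * b j

private def outc {Ω : Type*} {d : ℕ} (S : ℕ → Ω → Fin d → ℝ) (m N : ℕ)
    (G : ℕ → Ω → Fin d → ℝ) (ω : Ω) : ℝ :=
  ∑ k ∈ Finset.range N, dotp (G (m+k+1) ω) (fun j => S (m+k+1) ω j - S (m+k) ω j)

private lemma outc_succ {Ω : Type*} {d : ℕ} (S : ℕ → Ω → Fin d → ℝ) (m N : ℕ)
    (G : ℕ → Ω → Fin d → ℝ) (ω : Ω) :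
    outc S m (N+1) G ω = dotp (G (m+1) ω) (fun j => S (m+1) ω j - S m ω j)
      + outc S (m+1) N G ω := by
  unfold outc
  rw [Finset.sum_range_succ']
  simp only [Nat.add_zero]
  rw [add_comm]
  congr 1
  apply Finset.sum_congr rfl
  intro k _
  have h1 : m + (k+1) + 1 = (m+1) + k + 1 := by omega
  have h2 : m + (k+1) = (m+1) + k := by omega
  rw [h1, h2]

private lemma outc_congr_pt {Ω : Type*} {d : ℕ} {S : ℕ → Ω → Fin d → ℝ} {m N : ℕ}
    {A B : ℕ → Ω → Fin d → ℝ} {ω : Ω}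
    (h : ∀ k, k < N → A (m+k+1) ω = B (m+k+1) ω) :
    outc S m N A ω = outc S m N B ω := by
  unfold outc
  apply Finset.sum_congr rfl
  intro k hk
  rw [h k (Finset.mem_range.1 hk)]

private lemma outc_zero_strat {Ω : Type*} {d : ℕ} (S : ℕ → Ω → Fin d → ℝ) (m N : ℕ)
    (ω : Ω) : outc S m N (fun _ _ => (0 : Fin d → ℝ)) ω = 0 := by
  simp [outc, dotp]

private lemma outc_sub {Ω : Type*} {d : ℕ} (S : ℕ → Ω → Fin d → ℝ) (m N : ℕ)
    (A B : ℕ → Ω → Fin d → ℝ) (ω : Ω) :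
    outc S m N (fun k ω' j => A k ω' j - B k ω' j) ω = outc S m N A ω - outc S m N B ω := by
  simp [outc, dotp, sub_mul, Finset.sum_sub_distrib]

private lemma outc_add {Ω : Type*} {d : ℕ} (S : ℕ → Ω → Fin d → ℝ) (m N : ℕ)
    (A B : ℕ → Ω → Fin d → ℝ) (ω : Ω) :
    outc S m N (fun k ω' j => A k ω' j + B k ω' j) ω = outc S m N A ω + outc S m N B ω := by
  simp [outc, dotp, add_mul, Finset.sum_add_distrib]

private lemma outc_smul {Ω : Type*} {d : ℕ} (S : ℕ → Ω → Fin d → ℝ) (m N : ℕ)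
    (c : Ω → ℝ) (A : ℕ → Ω → Fin d → ℝ) (ω : Ω) :
    outc S m N (fun k ω' j => c ω' * A k ω' j) ω = c ω * outc S m N A ω := by
  simp [outc, dotp, Finset.mul_sum, mul_assoc]

private lemma outc_finset_sum {Ω : Type*} {d : ℕ} (S : ℕ → Ω → Fin d → ℝ) (m N : ℕ)
    {ι : Type*} (s : Finset ι) (A : ι → ℕ → Ω → Fin d → ℝ) (ω : Ω) :
    outc S m N (fun k ω' j => ∑ i ∈ s, A i k ω' j) ω = ∑ i ∈ s, outc S m N (A i) ω := by
  unfold outc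
  have h1 : ∀ k, dotp (fun j => ∑ i ∈ s, A i (m+k+1) ω j) (fun j => S (m+k+1) ω j - S (m+k) ω j)
      = ∑ i ∈ s, dotp (A i (m+k+1) ω) (fun j => S (m+k+1) ω j - S (m+k) ω j) := by
    intro k
    unfold dotp
    simp only [Finset.sum_mul]
    exact Finset.sum_comm
  simp only [h1]
  exact Finset.sum_comm

private lemma meas_dotp {Ω : Type*} {mΩ : MeasurableSpace Ω} {d : ℕ}
    {a b : Ω → Fin d → ℝ} (ha : Measurable a) (hb : Measurable b) :
    Measurable (fun ω => dotp (a ω) (b ω)) := by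
  unfold dotp
  exact Finset.measurable_sum _ fun j _ =>
    ((measurable_pi_apply j).comp ha).mul ((measurable_pi_apply j).comp hb)

private lemma tendsto_dotp {d : ℕ} {a : ℕ → Fin d → ℝ} {L c : Fin d → ℝ}
    (h : Tendsto a atTop (𝓝 L)) :
    Tendsto (fun n => dotp (a n) c) atTop (𝓝 (dotp L c)) := by
  unfold dotp
  apply tendsto_finset_sum
  intro j _
  exact ((tendsto_pi_nhds.1 h j).mul tendsto_const_nhds)

private def ClosedProp {Ω : Type*} (m0 : MeasurableSpace Ω) (ℱ : Filtration ℕ m0)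
    (P : Measure Ω) (d : ℕ) (S : ℕ → Ω → Fin d → ℝ) (N : ℕ) : Prop :=
  ∀ m : ℕ, ∀ G : ℕ → ℕ → Ω → Fin d → ℝ,
    (∀ n k, Measurable[ℱ k] (G n (k+1))) →
    ∀ ζ : Ω → ℝ, Measurable ζ →
    (∀ᵐ ω ∂P, Tendsto (fun n => outc S m N (G n) ω) atTop (𝓝 (ζ ω))) →
    ∃ H : ℕ → Ω → Fin d → ℝ, (∀ k, Measurable[ℱ k] (H (k+1))) ∧
      ∀ᵐ ω ∂P, ζ ω = outc S m N H ω

private lemma closedProp_zero {Ω : Type*} {m0 : MeasurableSpace Ω} (ℱ : Filtration ℕ m0)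
    (P : Measure Ω) {d : ℕ} (S : ℕ → Ω → Fin d → ℝ) :
    ClosedProp m0 ℱ P d S 0 := by
  intro m G hG ζ hζ htend
  refine ⟨fun _ _ => 0, fun k => measurable_const, ?_⟩
  filter_upwards [htend] with ω hω
  have h0 : (fun n => outc S m 0 (G n) ω) = fun _ => (0:ℝ) := by
    funext n; simp [outc]
  rw [h0] at hω
  have : ζ ω = 0 := tendsto_nhds_unique hω tendsto_const_nhds
  rw [this]
  simp [outc]
private lemma meas_norm' {Ω : Type*} {mΩ : MeasurableSpace Ω} {d : ℕ} {f : Ω → Fin d → ℝ}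
    (hf : Measurable f) : Measurable fun ω => ‖f ω‖ := hf.norm

private lemma meas_pi' {Ω : Type*} {mΩ : MeasurableSpace Ω} {d : ℕ} {f : Ω → Fin d → ℝ}
    (hf : ∀ j, Measurable fun ω => f ω j) : Measurable f := measurable_pi_lambda f hf

private lemma meas_app {Ω : Type*} {mΩ : MeasurableSpace Ω} {d : ℕ} {f : Ω → Fin d → ℝ}
    (hf : Measurable f) (j : Fin d) : Measurable fun ω => f ω j :=
  (measurable_pi_apply j).comp hf

private lemma meas_max_inv {Ω : Type*} {mΩ : MeasurableSpace Ω} {f : Ω → ℝ}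
    (hf : Measurable f) : Measurable fun ω => (max 1 (f ω))⁻¹ :=
  (measurable_const.max hf).inv

private lemma meas_sum' {Ω : Type*} {mΩ : MeasurableSpace Ω} {ι : Type*} (s : Finset ι)
    {f : ι → Ω → ℝ} (hf : ∀ i ∈ s, Measurable (f i)) :
    Measurable (fun ω => ∑ i ∈ s, f i ω) := Finset.measurable_sum s hf

private lemma dotp_smul {d : ℕ} (c : ℝ) (x y : Fin d → ℝ) :
    dotp (fun j => c * x j) y = c * dotp x y := by
  simp [dotp, Finset.mul_sum, mul_assoc]

private lemma inner_step {Ω : Type*} {m0 : MeasurableSpace Ω} (ℱ : Filtration ℕ m0)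
    (P : Measure Ω) {d : ℕ} (S : ℕ → Ω → Fin d → ℝ) (hS : ∀ k, Measurable (S k))
    (N : ℕ) (ihN : ClosedProp m0 ℱ P d S N) :
    ∀ (c : ℕ) (s : Finset (Fin d)), s.card ≤ c →
    ∀ m : ℕ, ∀ G : ℕ → ℕ → Ω → Fin d → ℝ,
    (∀ n k, Measurable[ℱ k] (G n (k+1))) →
    (∀ n ω j, j ∉ s → G n (m+1) ω j = 0) →
    ∀ ζ : Ω → ℝ, Measurable ζ →
    (∀ᵐ ω ∂P, Tendsto (fun n => outc S m (N+1) (G n) ω) atTop (𝓝 (ζ ω))) →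
    ∃ H : ℕ → Ω → Fin d → ℝ, (∀ k, Measurable[ℱ k] (H (k+1))) ∧
      ∀ᵐ ω ∂P, ζ ω = outc S m (N+1) H ω := by
  have hΔmeas : ∀ k, Measurable (fun ω => (fun j => S (k+1) ω j - S k ω j)) := fun k =>
    measurable_pi_lambda _ fun j =>
      ((measurable_pi_apply j).comp (hS (k+1))).sub ((measurable_pi_apply j).comp (hS k))
  intro c
  induction c with
  | zero =>
    intro s hcard m G hG hsupp ζ hζ htend
    have hs0 : s = ∅ := Finset.card_eq_zero.1 (Nat.le_zero.1 hcard)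
    have hG0 : ∀ n ω, G n (m+1) ω = 0 := by
      intro n ω; funext j
      exact hsupp n ω j (by simp [hs0])
    have htend' : ∀ᵐ ω ∂P, Tendsto (fun n => outc S (m+1) N (G n) ω) atTop (𝓝 (ζ ω)) := by
      filter_upwards [htend] with ω hω
      have heq : ∀ n, outc S (m+1) N (G n) ω = outc S m (N+1) (G n) ω := by
        intro n
        rw [outc_succ, hG0 n ω]
        simp [dotp]
      simpa only [heq] using hω
    obtain ⟨K, hK, hKe⟩ := ihN (m+1) G hG ζ hζ htend'
    refine ⟨fun k => if k = m+1 then (fun _ => 0) else K k, ?_, ?_⟩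
    · intro k
      by_cases hk : k+1 = m+1
      · simp only [if_pos hk]
        exact measurable_const
      · simp only [if_neg hk]
        exact hK k
    · filter_upwards [hKe] with ω hKω
      rw [outc_succ]
      have h2 : outc S (m+1) N (fun k => if k = m+1 then (fun _ => (0 : Fin d → ℝ)) else K k) ω
          = outc S (m+1) N K ω := by
        apply outc_congr_pt
        intro k hk
        simp only [if_neg (by omega : ¬ (m+1+k+1 = m+1))]
      simp only [if_pos rfl]
      rw [h2, ← hKω]
      simp [dotp]
  | succ c ihc =>
    intro s hcard m G hG hsupp ζ hζ htend
    classical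
    -- Ω₁: the set where the first-step holdings have a bounded subsequence
    set Ω₁ : Set Ω := {ω | ∃ C : ℕ, ∀ N', ∃ n, N' ≤ n ∧ ‖G n (m+1) ω‖ ≤ (C:ℝ)} with hΩ₁_def
    have hΩ₁ : MeasurableSet[ℱ m] Ω₁ := by
      rw [hΩ₁_def]
      simp only [Set.setOf_exists, Set.setOf_forall]
      refine MeasurableSet.iUnion fun C => MeasurableSet.iInter fun N' =>
        MeasurableSet.iUnion fun n => ?_
      rw [Set.setOf_and]
      exact (MeasurableSet.const _).inter
        (measurableSet_le (meas_norm' (hG n m)) measurable_const)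
    -- Case A: measurable selection on Ω₁
    obtain ⟨τA, FA, hτAmeas, hFAmeas, hτAmono, hτAconv⟩ :=
      cluster_selection (mΩ := ℱ m) (fun n ω => G n (m+1) ω) (fun n => hG n m)
    set TA : ℕ → ℕ → Ω → Fin d → ℝ := fun n k =>
      if k ≤ m+1 then (fun _ => 0) else Set.indicator Ω₁ (fun ω => G (τA n ω) k ω) with hTA_def
    have hTAmeas : ∀ n k, Measurable[ℱ k] (TA n (k+1)) := by
      intro n k
      simp only [hTA_def]
      by_cases hk : k+1 ≤ m+1
      · simp only [if_pos hk]; exact measurable_const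
      · simp only [if_neg hk]
        have hmk : m ≤ k := by omega
        refine Measurable.indicator ?_ (ℱ.mono hmk _ hΩ₁)
        exact meas_comp_nat (m := ℱ k) (fun n' => hG n' k)
          ((hτAmeas n).mono (ℱ.mono hmk) le_rfl)
    set ζA : Ω → ℝ := Set.indicator Ω₁
      (fun ω => ζ ω - dotp (FA ω) (fun j => S (m+1) ω j - S m ω j)) with hζA_def
    have hζAmeas : Measurable ζA := by
      rw [hζA_def]
      refine Measurable.indicator ?_ (ℱ.le m _ hΩ₁)
      exact hζ.sub (meas_dotp (hFAmeas.mono (ℱ.le m) le_rfl) (hΔmeas m))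
    have htendA : ∀ᵐ ω ∂P, Tendsto (fun n => outc S (m+1) N (TA n) ω) atTop (𝓝 (ζA ω)) := by
      filter_upwards [htend] with ω hω
      by_cases hω1 : ω ∈ Ω₁
      · have heq : ∀ n, outc S (m+1) N (TA n) ω
            = outc S m (N+1) (G (τA n ω)) ω
              - dotp (G (τA n ω) (m+1) ω) (fun j => S (m+1) ω j - S m ω j) := by
          intro n
          have h1 : outc S (m+1) N (TA n) ω = outc S (m+1) N (G (τA n ω)) ω := by
            apply outc_congr_pt
            intro k hk
            simp only [hTA_def, if_neg (by omega : ¬ (m+1+k+1 ≤ m+1))]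
            exact Set.indicator_of_mem hω1 _
          rw [h1, outc_succ (S := S) (m := m) (N := N) (G := G (τA n ω)) (ω := ω)]
          ring
        have hsub : Tendsto (fun n => outc S m (N+1) (G (τA n ω)) ω) atTop (𝓝 (ζ ω)) :=
          hω.comp ((hτAmono ω).tendsto_atTop)
        have hdot : Tendsto (fun n => dotp (G (τA n ω) (m+1) ω)
            (fun j => S (m+1) ω j - S m ω j)) atTop
            (𝓝 (dotp (FA ω) (fun j => S (m+1) ω j - S m ω j))) :=
          tendsto_dotp (hτAconv ω hω1)
        have hfin := hsub.sub hdot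
        rw [hζA_def, Set.indicator_of_mem hω1]
        exact Tendsto.congr (fun n => (heq n).symm) hfin
      · have heq : ∀ n, outc S (m+1) N (TA n) ω = 0 := by
          intro n
          have h1 : outc S (m+1) N (TA n) ω = outc S (m+1) N (fun _ _ => (0:Fin d → ℝ)) ω := by
            apply outc_congr_pt
            intro k hk
            simp only [hTA_def, if_neg (by omega : ¬ (m+1+k+1 ≤ m+1))]
            exact Set.indicator_of_notMem hω1 _
          rw [h1, outc_zero_strat]
        rw [hζA_def, Set.indicator_of_notMem hω1]
        simp only [heq]
        exact tendsto_const_nhds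
    obtain ⟨KA, hKAmeas, hKAe⟩ := ihN (m+1) TA hTAmeas ζA hζAmeas htendA
    set HA : ℕ → Ω → Fin d → ℝ := fun k =>
      if k = m+1 then Set.indicator Ω₁ FA else KA k with hHA_def
    have hHAmeas : ∀ k, Measurable[ℱ k] (HA (k+1)) := by
      intro k
      simp only [hHA_def]
      by_cases hk : k+1 = m+1
      · simp only [if_pos hk]
        have hkm : k = m := by omega
        subst hkm
        exact hFAmeas.indicator hΩ₁
      · simp only [if_neg hk]; exact hKAmeas k
    have hHAe : ∀ᵐ ω ∂P, Set.indicator Ω₁ ζ ω = outc S m (N+1) HA ω := by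
      filter_upwards [hKAe] with ω hKω
      have h2 : outc S (m+1) N HA ω = outc S (m+1) N KA ω := by
        apply outc_congr_pt
        intro k hk
        simp only [hHA_def, if_neg (by omega : ¬ (m+1+k+1 = m+1))]
      have h3 : HA (m+1) = Set.indicator Ω₁ FA := by simp [hHA_def]
      rw [outc_succ, h3, h2, ← hKω]
      by_cases hω1 : ω ∈ Ω₁
      · rw [hζA_def, Set.indicator_of_mem hω1, Set.indicator_of_mem hω1,
          Set.indicator_of_mem hω1]
        ring
      · rw [hζA_def, Set.indicator_of_notMem hω1, Set.indicator_of_notMem hω1,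
          Set.indicator_of_notMem hω1]
        simp [dotp]
    -- Case B: the set where first-step holdings blow up
    set Ω₂ : Set Ω := Ω₁ᶜ with hΩ₂_def
    have hΩ₂ : MeasurableSet[ℱ m] Ω₂ := hΩ₁.compl
    set a : ℕ → Ω → ℝ := fun n ω => (max 1 ‖G n (m+1) ω‖)⁻¹ with ha_def
    have hameas : ∀ n, Measurable[ℱ m] (a n) := by
      intro n; simp only [ha_def]
      exact meas_max_inv (meas_norm' (hG n m))
    have hmax_pos : ∀ n ω, (0:ℝ) < max 1 ‖G n (m+1) ω‖ :=
      fun n ω => lt_of_lt_of_le one_pos (le_max_left _ _)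
    have ha_pos : ∀ n ω, 0 < a n ω := by
      intro n ω; simp only [ha_def]
      exact inv_pos.2 (hmax_pos n ω)
    have ha_le : ∀ n ω, a n ω * ‖G n (m+1) ω‖ ≤ 1 := by
      intro n ω
      simp only [ha_def]
      calc (max 1 ‖G n (m+1) ω‖)⁻¹ * ‖G n (m+1) ω‖
          ≤ (max 1 ‖G n (m+1) ω‖)⁻¹ * max 1 ‖G n (m+1) ω‖ :=
            mul_le_mul_of_nonneg_left (le_max_right _ _) (inv_nonneg.2 (hmax_pos n ω).le)
        _ = 1 := inv_mul_cancel₀ (hmax_pos n ω).ne'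
    set v : ℕ → Ω → Fin d → ℝ :=
      fun n => Set.indicator Ω₂ (fun ω j => a n ω * G n (m+1) ω j) with hv_def
    have hvmeas : ∀ n, Measurable[ℱ m] (v n) := by
      intro n
      simp only [hv_def]
      refine Measurable.indicator ?_ hΩ₂
      exact meas_pi' fun j => (hameas n).mul (meas_app (hG n m) j)
    have hv_bdd : ∀ n ω, ‖v n ω‖ ≤ 1 := by
      intro n ω
      simp only [hv_def]
      by_cases hmem : ω ∈ Ω₂
      · rw [Set.indicator_of_mem hmem]
        rw [pi_norm_le_iff_of_nonneg zero_le_one]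
        intro j
        have h1 : ‖a n ω * G n (m+1) ω j‖ = a n ω * ‖G n (m+1) ω j‖ := by
          rw [norm_mul, Real.norm_eq_abs (a n ω), abs_of_pos (ha_pos n ω)]
        rw [h1]
        calc a n ω * ‖G n (m+1) ω j‖ ≤ a n ω * ‖G n (m+1) ω‖ :=
              mul_le_mul_of_nonneg_left (norm_le_pi_norm _ j) (ha_pos n ω).le
          _ ≤ 1 := ha_le n ω
      · rw [Set.indicator_of_notMem hmem]
        simp
    obtain ⟨τB, g, hτBmeas, hgmeas, hτBmono, hτBconv⟩ :=
      cluster_selection (mΩ := ℱ m) v hvmeas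
    have hgconv : ∀ ω, Tendsto (fun k => v (τB k ω) ω) atTop (𝓝 (g ω)) := by
      intro ω
      refine hτBconv ω ⟨1, fun N' => ⟨N', le_rfl, ?_⟩⟩
      simpa using hv_bdd N' ω
    have hg0 : ∀ ω, ω ∉ Ω₂ → g ω = 0 := by
      intro ω hmem
      have h1 := hgconv ω
      have h2 : (fun k => v (τB k ω) ω) = fun _ => (0 : Fin d → ℝ) := by
        funext k
        simp only [hv_def]
        exact Set.indicator_of_notMem hmem _
      rw [h2] at h1
      exact tendsto_nhds_unique h1 tendsto_const_nhds
    have htendinf : ∀ ω, ω ∈ Ω₂ → Tendsto (fun n => ‖G n (m+1) ω‖) atTop atTop := by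
      intro ω hω2
      have hnot : ¬ ∃ C : ℕ, ∀ N', ∃ n, N' ≤ n ∧ ‖G n (m+1) ω‖ ≤ (C:ℝ) := by
        intro hc
        rw [hΩ₂_def] at hω2
        exact hω2 (by rw [hΩ₁_def]; exact hc)
      push_neg at hnot
      rw [tendsto_atTop]
      intro b
      obtain ⟨N', hN'⟩ := hnot ⌈b⌉₊
      rw [eventually_atTop]
      refine ⟨N', fun n hn => ?_⟩
      have h1 := hN' n hn
      have hb : b ≤ (⌈b⌉₊:ℝ) := Nat.le_ceil b
      linarith
    have ha0 : ∀ ω, ω ∈ Ω₂ → Tendsto (fun n => a n ω) atTop (𝓝 0) := by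
      intro ω hmem
      have h1 : Tendsto (fun n => max 1 ‖G n (m+1) ω‖) atTop atTop :=
        tendsto_atTop_mono (fun n => le_max_right _ _) (htendinf ω hmem)
      exact h1.inv_tendsto_atTop
    have hgnorm : ∀ ω, ω ∈ Ω₂ → ‖g ω‖ = 1 := by
      intro ω hmem
      have hnorm : Tendsto (fun k => ‖v (τB k ω) ω‖) atTop (𝓝 ‖g ω‖) := (hgconv ω).norm
      have hev : ∀ᶠ k in atTop, ‖v (τB k ω) ω‖ = 1 := by
        have h1 : ∀ᶠ n in atTop, 1 ≤ ‖G n (m+1) ω‖ := (htendinf ω hmem).eventually_ge_atTop 1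
        have h2 : Tendsto (fun k => τB k ω) atTop atTop := (hτBmono ω).tendsto_atTop
        filter_upwards [h2.eventually h1] with k hk
        simp only [hv_def]
        rw [Set.indicator_of_mem hmem]
        have h3 : (fun j => a (τB k ω) ω * G (τB k ω) (m+1) ω j)
            = a (τB k ω) ω • (G (τB k ω) (m+1) ω) := rfl
        rw [h3, norm_smul, Real.norm_eq_abs, abs_of_pos (ha_pos _ _)]
        simp only [ha_def]
        rw [max_eq_right hk]
        exact inv_mul_cancel₀ (by linarith)
      have h4 : Tendsto (fun _ : ℕ => (1:ℝ)) atTop (𝓝 ‖g ω‖) := Tendsto.congr' hev hnorm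
      exact tendsto_nhds_unique h4 tendsto_const_nhds
    have hgsupp : ∀ ω j, j ∉ s → g ω j = 0 := by
      intro ω j hj
      have h1 : Tendsto (fun k => v (τB k ω) ω j) atTop (𝓝 (g ω j)) :=
        tendsto_pi_nhds.1 (hgconv ω) j
      have h2 : (fun k => v (τB k ω) ω j) = fun _ => (0:ℝ) := by
        funext k
        simp only [hv_def]
        by_cases hmem : ω ∈ Ω₂
        · rw [Set.indicator_of_mem hmem]
          simp [hsupp _ ω j hj]
        · rw [Set.indicator_of_notMem hmem]
          rfl
      rw [h2] at h1
      exact tendsto_nhds_unique h1 tendsto_const_nhds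
    set TB : ℕ → ℕ → Ω → Fin d → ℝ := fun n k =>
      if k ≤ m+1 then (fun _ => 0)
      else Set.indicator Ω₂ (fun ω j => a (τB n ω) ω * G (τB n ω) k ω j) with hTB_def
    have hTBmeas : ∀ n k, Measurable[ℱ k] (TB n (k+1)) := by
      intro n k
      simp only [hTB_def]
      by_cases hk : k+1 ≤ m+1
      · simp only [if_pos hk]; exact measurable_const
      · simp only [if_neg hk]
        have hmk : m ≤ k := by omega
        refine Measurable.indicator ?_ (ℱ.mono hmk _ hΩ₂)
        have hu : ∀ n', Measurable[ℱ k] (fun ω => (fun j => a n' ω * G n' (k+1) ω j)) :=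
          fun n' => meas_pi' fun j =>
            ((hameas n').mono (ℱ.mono hmk) le_rfl).mul (meas_app (hG n' k) j)
        exact meas_comp_nat (m := ℱ k) hu ((hτBmeas n).mono (ℱ.mono hmk) le_rfl)
    set ζB : Ω → ℝ := fun ω => -(dotp (g ω) (fun j => S (m+1) ω j - S m ω j)) with hζB_def
    have hζBmeas : Measurable ζB := by
      rw [hζB_def]
      exact (meas_dotp (hgmeas.mono (ℱ.le m) le_rfl) (hΔmeas m)).neg
    have htendB : ∀ᵐ ω ∂P, Tendsto (fun n => outc S (m+1) N (TB n) ω) atTop (𝓝 (ζB ω)) := by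
      filter_upwards [htend] with ω hω
      by_cases hmem : ω ∈ Ω₂
      · have heq : ∀ n, outc S (m+1) N (TB n) ω
            = a (τB n ω) ω * outc S m (N+1) (G (τB n ω)) ω
              - dotp (v (τB n ω) ω) (fun j => S (m+1) ω j - S m ω j) := by
          intro n
          have h1 : outc S (m+1) N (TB n) ω
              = outc S (m+1) N (fun k ω' j => a (τB n ω') ω' * G (τB n ω') k ω' j) ω := by
            apply outc_congr_pt
            intro k hk
            simp only [hTB_def, if_neg (by omega : ¬ (m+1+k+1 ≤ m+1))]
            rw [Set.indicator_of_mem hmem]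
          rw [h1]
          have h2 : outc S (m+1) N (fun k ω' j => a (τB n ω') ω' * G (τB n ω') k ω' j) ω
              = a (τB n ω) ω * outc S (m+1) N (G (τB n ω)) ω := by
            have h2a : outc S (m+1) N (fun k ω' j => a (τB n ω') ω' * G (τB n ω') k ω' j) ω
                = outc S (m+1) N (fun k ω' j => a (τB n ω) ω' * G (τB n ω) k ω' j) ω := by
              apply outc_congr_pt
              intro k hk
              rfl
            rw [h2a]
            exact outc_smul S (m+1) N (fun _ => a (τB n ω) ω) (G (τB n ω)) ω
          rw [h2]
          have h3 : outc S (m+1) N (G (τB n ω)) ω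
              = outc S m (N+1) (G (τB n ω)) ω
                - dotp (G (τB n ω) (m+1) ω) (fun j => S (m+1) ω j - S m ω j) := by
            rw [outc_succ (G := G (τB n ω))]; ring
          rw [h3]
          have h4 : dotp (v (τB n ω) ω) (fun j => S (m+1) ω j - S m ω j)
              = a (τB n ω) ω * dotp (G (τB n ω) (m+1) ω) (fun j => S (m+1) ω j - S m ω j) := by
            simp only [hv_def]
            rw [Set.indicator_of_mem hmem]
            exact dotp_smul _ _ _
          rw [h4]
          ring
        have hsub : Tendsto (fun n => outc S m (N+1) (G (τB n ω)) ω) atTop (𝓝 (ζ ω)) :=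
          hω.comp ((hτBmono ω).tendsto_atTop)
        have ha0' : Tendsto (fun n => a (τB n ω) ω) atTop (𝓝 0) :=
          (ha0 ω hmem).comp ((hτBmono ω).tendsto_atTop)
        have hdot : Tendsto (fun n => dotp (v (τB n ω) ω) (fun j => S (m+1) ω j - S m ω j))
            atTop (𝓝 (dotp (g ω) (fun j => S (m+1) ω j - S m ω j))) :=
          tendsto_dotp (hgconv ω)
        have hfin := (ha0'.mul hsub).sub hdot
        rw [zero_mul, zero_sub] at hfin
        rw [hζB_def]
        exact Tendsto.congr (fun n => (heq n).symm) hfin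
      · have heq : ∀ n, outc S (m+1) N (TB n) ω = 0 := by
          intro n
          have h1 : outc S (m+1) N (TB n) ω = outc S (m+1) N (fun _ _ => (0:Fin d → ℝ)) ω := by
            apply outc_congr_pt
            intro k hk
            simp only [hTB_def, if_neg (by omega : ¬ (m+1+k+1 ≤ m+1))]
            exact Set.indicator_of_notMem hmem _
          rw [h1, outc_zero_strat]
        have hζB0 : ζB ω = 0 := by
          rw [hζB_def]
          simp only [hg0 ω hmem]
          simp [dotp]
        rw [hζB0]
        simp only [heq]
        exact tendsto_const_nhds
    obtain ⟨KB, hKBmeas, hKBe⟩ := ihN (m+1) TB hTBmeas ζB hζBmeas htendB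
    set Z : ℕ → Ω → Fin d → ℝ := fun k => if k = m+1 then g else KB k with hZ_def
    have hZmeas : ∀ k, Measurable[ℱ k] (Z (k+1)) := by
      intro k
      simp only [hZ_def]
      by_cases hk : k+1 = m+1
      · simp only [if_pos hk]
        have hkm : k = m := by omega
        subst hkm
        exact hgmeas
      · simp only [if_neg hk]; exact hKBmeas k
    have hZ0 : ∀ᵐ ω ∂P, outc S m (N+1) Z ω = 0 := by
      filter_upwards [hKBe] with ω hKω
      rw [outc_succ]
      have h2 : outc S (m+1) N Z ω = outc S (m+1) N KB ω := by
        apply outc_congr_pt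
        intro k hk
        simp only [hZ_def, if_neg (by omega : ¬ (m+1+k+1 = m+1))]
      have h3 : Z (m+1) = g := by simp [hZ_def]
      rw [h3, h2, ← hKω, hζB_def]
      ring
    -- per-coordinate reduction on Ω₂
    have hmain : ∀ i : Fin d, i ∈ s → ∃ Hi : ℕ → Ω → Fin d → ℝ,
        (∀ k, Measurable[ℱ k] (Hi (k+1))) ∧
        ∀ᵐ ω ∂P, Set.indicator {ω' | ω' ∈ Ω₂ ∧ g ω' i ≠ 0 ∧ ∀ i' ∈ s, i' < i → g ω' i' = 0}
          ζ ω = outc S m (N+1) Hi ω := by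
      intro i hi
      set Ω2i : Set Ω :=
        {ω' | ω' ∈ Ω₂ ∧ g ω' i ≠ 0 ∧ ∀ i' ∈ s, i' < i → g ω' i' = 0} with hΩ2i_def
      have hΩ2imeas : MeasurableSet[ℱ m] Ω2i := by
        rw [hΩ2i_def]
        simp only [Set.setOf_and]
        refine MeasurableSet.inter hΩ₂ (MeasurableSet.inter ?_ ?_)
        · have : {ω' | g ω' i ≠ 0} = (fun ω' => g ω' i) ⁻¹' ({0}ᶜ) := rfl
          rw [this]
          exact ((measurable_pi_apply i).comp hgmeas) (measurableSet_singleton 0).compl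
        · have : {ω' | ∀ i' ∈ s, i' < i → g ω' i' = 0}
              = ⋂ i', {ω' | i' ∈ s → i' < i → g ω' i' = 0} := by
            rw [← Set.setOf_forall]
          rw [this]
          refine MeasurableSet.iInter fun i' => ?_
          by_cases h : i' ∈ s ∧ i' < i
          · have hset : {ω' | i' ∈ s → i' < i → g ω' i' = 0} = {ω' | g ω' i' = 0} := by
              ext ω'; simp [h.1, h.2]
            rw [hset]
            have : {ω' | g ω' i' = 0} = (fun ω' => g ω' i') ⁻¹' {0} := rfl
            rw [this]
            exact ((measurable_pi_apply i').comp hgmeas) (measurableSet_singleton 0)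
          · have hset : {ω' | i' ∈ s → i' < i → g ω' i' = 0} = Set.univ := by
              ext ω'
              simp only [Set.mem_setOf_eq, Set.mem_univ, iff_true]
              intro h1 h2
              exact absurd ⟨h1, h2⟩ h
            rw [hset]
            exact MeasurableSet.univ
      set ci : ℕ → Ω → ℝ := fun n ω => G n (m+1) ω i / g ω i with hci_def
      have hcimeas : ∀ n, Measurable[ℱ m] (ci n) := by
        intro n
        simp only [hci_def]
        exact ((measurable_pi_apply i).comp (hG n m)).div ((measurable_pi_apply i).comp hgmeas)
      set Xi : ℕ → ℕ → Ω → Fin d → ℝ := fun n k =>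
        if k ≤ m then (fun _ => 0)
        else Set.indicator Ω2i (fun ω j => G n k ω j - ci n ω * Z k ω j) with hXi_def
      have hXimeas : ∀ n k, Measurable[ℱ k] (Xi n (k+1)) := by
        intro n k
        simp only [hXi_def]
        by_cases hk : k+1 ≤ m
        · simp only [if_pos hk]; exact measurable_const
        · simp only [if_neg hk]
          have hmk : m ≤ k := by omega
          refine Measurable.indicator ?_ (ℱ.mono hmk _ hΩ2imeas)
          refine meas_pi' fun j => ?_
          exact (meas_app (hG n k) j).sub
            (((hcimeas n).mono (ℱ.mono hmk) le_rfl).mul (meas_app (hZmeas k) j))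
      have hXisupp : ∀ n ω j, j ∉ s.erase i → Xi n (m+1) ω j = 0 := by
        intro n ω j hj
        simp only [hXi_def, if_neg (by omega : ¬ (m+1 ≤ m))]
        by_cases hmem : ω ∈ Ω2i
        · rw [Set.indicator_of_mem hmem]
          have hZm : Z (m+1) = g := by simp [hZ_def]
          simp only [hZm]
          by_cases hji : j = i
          · subst hji
            simp only [hci_def]
            have hgne : g ω j ≠ 0 := hmem.2.1
            rw [div_mul_cancel₀ _ hgne, sub_self]
          · have hjs : j ∉ s := fun hjs => hj (Finset.mem_erase.2 ⟨hji, hjs⟩)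
            rw [hsupp n ω j hjs, hgsupp ω j hjs]
            ring
        · rw [Set.indicator_of_notMem hmem]
          rfl
      have hXitend : ∀ᵐ ω ∂P, Tendsto (fun n => outc S m (N+1) (Xi n) ω) atTop
          (𝓝 (Set.indicator Ω2i ζ ω)) := by
        filter_upwards [htend, hZ0] with ω hω hZω
        by_cases hmem : ω ∈ Ω2i
        · have heq : ∀ n, outc S m (N+1) (Xi n) ω
              = outc S m (N+1) (G n) ω - ci n ω * outc S m (N+1) Z ω := by
            intro n
            have h1 : outc S m (N+1) (Xi n) ω
                = outc S m (N+1) (fun k ω' j => G n k ω' j - ci n ω' * Z k ω' j) ω := by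
              apply outc_congr_pt
              intro k hk
              simp only [hXi_def, if_neg (by omega : ¬ (m+k+1 ≤ m))]
              rw [Set.indicator_of_mem hmem]
            rw [h1, outc_sub S m (N+1) (G n) (fun k ω' j => ci n ω' * Z k ω' j),
              outc_smul S m (N+1) (ci n) Z]
          simp only [heq, hZω, mul_zero, sub_zero]
          rw [Set.indicator_of_mem hmem]
          exact hω
        · have heq : ∀ n, outc S m (N+1) (Xi n) ω = 0 := by
            intro n
            have h1 : outc S m (N+1) (Xi n) ω
                = outc S m (N+1) (fun _ _ => (0:Fin d → ℝ)) ω := by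
              apply outc_congr_pt
              intro k hk
              simp only [hXi_def, if_neg (by omega : ¬ (m+k+1 ≤ m))]
              exact Set.indicator_of_notMem hmem _
            rw [h1, outc_zero_strat]
          rw [Set.indicator_of_notMem hmem]
          simp only [heq]
          exact tendsto_const_nhds
      have hcard' : (s.erase i).card ≤ c := by
        have := Finset.card_erase_of_mem hi
        omega
      exact ihc (s.erase i) hcard' m Xi hXimeas hXisupp
        (Set.indicator Ω2i ζ) (hζ.indicator (ℱ.le m _ hΩ2imeas)) hXitend
    have hmain' : ∀ i : Fin d, ∃ Hi : ℕ → Ω → Fin d → ℝ,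
        (∀ k, Measurable[ℱ k] (Hi (k+1))) ∧
        (i ∈ s → ∀ᵐ ω ∂P,
          Set.indicator {ω' | ω' ∈ Ω₂ ∧ g ω' i ≠ 0 ∧ ∀ i' ∈ s, i' < i → g ω' i' = 0}
            ζ ω = outc S m (N+1) Hi ω) := by
      intro i
      by_cases hi : i ∈ s
      · obtain ⟨Hi, h1, h2⟩ := hmain i hi
        exact ⟨Hi, h1, fun _ => h2⟩
      · exact ⟨fun _ _ => 0, fun k => measurable_const, fun hi' => absurd hi' hi⟩
    choose HB hHBmeas hHBe using hmain'
    refine ⟨fun k ω j => HA k ω j + ∑ i ∈ s, HB i k ω j, ?_, ?_⟩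
    · intro k
      refine meas_pi' fun j => ?_
      refine Measurable.add (meas_app (hHAmeas k) j) ?_
      exact meas_sum' s fun i _ => meas_app (hHBmeas i k) j
    · have hae : ∀ᵐ ω ∂P, ∀ i, i ∈ s →
          Set.indicator {ω' | ω' ∈ Ω₂ ∧ g ω' i ≠ 0 ∧ ∀ i' ∈ s, i' < i → g ω' i' = 0} ζ ω
            = outc S m (N+1) (HB i) ω := by
        rw [ae_all_iff]
        intro i
        by_cases hi : i ∈ s
        · filter_upwards [hHBe i hi] with ω h using fun _ => h
        · filter_upwards with ω using fun hi' => absurd hi' hi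
      filter_upwards [hHAe, hae] with ω hA hB
      rw [outc_add S m (N+1) HA (fun k ω' j => ∑ i ∈ s, HB i k ω' j) ω,
        outc_finset_sum S m (N+1) s (fun i => HB i) ω, ← hA]
      have hsum : ∑ i ∈ s, outc S m (N+1) (HB i) ω
          = ∑ i ∈ s, Set.indicator
              {ω' | ω' ∈ Ω₂ ∧ g ω' i ≠ 0 ∧ ∀ i' ∈ s, i' < i → g ω' i' = 0} ζ ω := by
        apply Finset.sum_congr rfl
        intro i hi
        rw [← hB i hi]
      rw [hsum]
      by_cases hω1 : ω ∈ Ω₁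
      · have hz : ∀ i ∈ s, Set.indicator
            {ω' | ω' ∈ Ω₂ ∧ g ω' i ≠ 0 ∧ ∀ i' ∈ s, i' < i → g ω' i' = 0} ζ ω = 0 := by
          intro i hi
          apply Set.indicator_of_notMem
          intro hmem
          exact hmem.1 hω1
        rw [Finset.sum_congr rfl hz, Set.indicator_of_mem hω1]
        simp
      · have hω2 : ω ∈ Ω₂ := hω1
        rw [Set.indicator_of_notMem hω1]
        have hgne : ∃ i ∈ s, g ω i ≠ 0 := by
          by_contra hc
          push_neg at hc
          have hzero : g ω = 0 := by
            funext j
            by_cases hjs : j ∈ s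
            · exact hc j hjs
            · exact hgsupp ω j hjs
          have hn := hgnorm ω hω2
          rw [hzero, norm_zero] at hn
          norm_num at hn
        set t := s.filter (fun i => g ω i ≠ 0) with ht_def
        have htne : t.Nonempty := by
          obtain ⟨i, hi1, hi2⟩ := hgne
          exact ⟨i, Finset.mem_filter.2 ⟨hi1, hi2⟩⟩
        set i0 := t.min' htne with hi0_def
        have hi0t : i0 ∈ t := t.min'_mem htne
        have hi0s : i0 ∈ s := (Finset.mem_filter.1 hi0t).1
        have hi0ne : g ω i0 ≠ 0 := (Finset.mem_filter.1 hi0t).2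
        have hi0min : ∀ i' ∈ s, i' < i0 → g ω i' = 0 := by
          intro i' hi's hlt
          by_contra hne
          have hmem : i' ∈ t := Finset.mem_filter.2 ⟨hi's, hne⟩
          exact absurd hlt (not_lt.2 (t.min'_le i' hmem))
        have hmem0 : ω ∈ {ω' | ω' ∈ Ω₂ ∧ g ω' i0 ≠ 0 ∧ ∀ i' ∈ s, i' < i0 → g ω' i' = 0} :=
          ⟨hω2, hi0ne, hi0min⟩
        rw [Finset.sum_eq_single i0 ?_ ?_]
        · rw [Set.indicator_of_mem hmem0]
          ring
        · intro i hi hine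
          apply Set.indicator_of_notMem
          intro hmem
          rcases lt_or_gt_of_ne hine with hlt | hgt
          · have hmemt : i ∈ t := Finset.mem_filter.2 ⟨hi, hmem.2.1⟩
            exact absurd hlt (not_lt.2 (t.min'_le i hmemt))
          · exact hi0ne (hmem.2.2 i0 hi0s hgt)
        · intro hi0s'
          exact absurd hi0s hi0s'
private lemma closedProp_all {Ω : Type*} {m0 : MeasurableSpace Ω} (ℱ : Filtration ℕ m0)
    (P : Measure Ω) {d : ℕ} (S : ℕ → Ω → Fin d → ℝ) (hS : ∀ k, Measurable (S k)) :
    ∀ N, ClosedProp m0 ℱ P d S N := by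
  intro N
  induction N with
  | zero => exact closedProp_zero ℱ P S
  | succ N ihN =>
    intro m G hG ζ hζ htend
    exact inner_step ℱ P S hS N ihN d Finset.univ
      (by simp [Finset.card_univ]) m G hG
      (fun n ω j hj => absurd (Finset.mem_univ j) hj) ζ hζ htend

/-- The set of outcomes `∑_{k=1}^N ⟨H_k, S_k - S_{k-1}⟩` of discrete-time
stochastic integrals against an adapted `ℝ^d`-valued process `S` admitting an equivalent
martingale measure is closed under convergence in probability: any limit in probability of
such outcomes is itself (a.e. equal to) such an outcome. -/
theorem stmt16
    {Ω : Type*} {m0 : MeasurableSpace Ω} (ℱ : Filtration ℕ m0)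
    (P : Measure Ω) [IsProbabilityMeasure P]
    (d N : ℕ)
    (S : ℕ → Ω → Fin d → ℝ)
    (hadapted : ∀ j, Adapted ℱ (fun n ω => S n ω j))
    (hEMM : ∃ Q : Measure Ω, IsProbabilityMeasure Q ∧ Q ≪ P ∧ P ≪ Q ∧
      ∀ j, Martingale (fun n ω => S n ω j) ℱ Q)
    (Hs : ℕ → ℕ → Ω → Fin d → ℝ)
    (hHs : ∀ n : ℕ, ∀ k : ℕ, StronglyMeasurable[ℱ k] (Hs n (k + 1)))
    (ζ : Ω → ℝ) (hζmeas : Measurable ζ)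
    (htend : TendstoInMeasure P
      (fun n ω => ∑ k ∈ Finset.range N, ∑ j, Hs n (k + 1) ω j * (S (k + 1) ω j - S k ω j))
      Filter.atTop ζ) :
    ∃ H : ℕ → Ω → Fin d → ℝ,
      (∀ k : ℕ, StronglyMeasurable[ℱ k] (H (k + 1))) ∧
      ∀ᵐ ω ∂P,
        ζ ω = ∑ k ∈ Finset.range N, ∑ j, H (k + 1) ω j * (S (k + 1) ω j - S k ω j) := by
  have hS : ∀ k, Measurable (S k) := fun k =>
    measurable_pi_lambda _ fun j => (Measurable.mono (hadapted j k) (ℱ.le k) le_rfl)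
  obtain ⟨ns, hns_mono, hae⟩ := htend.exists_seq_tendsto_ae
  have hGmeas : ∀ n k, Measurable[ℱ k] (Hs (ns n) (k+1)) := fun n k => (hHs (ns n) k).measurable
  have houtc : ∀ (A : ℕ → Ω → Fin d → ℝ) ω, outc S 0 N A ω
      = ∑ k ∈ Finset.range N, ∑ j, A (k+1) ω j * (S (k+1) ω j - S k ω j) := by
    intro A ω
    simp [outc, dotp]
  have htend' : ∀ᵐ ω ∂P, Tendsto (fun n => outc S 0 N (Hs (ns n)) ω) atTop (𝓝 (ζ ω)) := by
    filter_upwards [hae] with ω hω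
    simp only [houtc]
    exact hω
  obtain ⟨H, hH, hHe⟩ := closedProp_all ℱ P S hS N 0 (fun n => Hs (ns n)) hGmeas ζ hζmeas htend'
  refine ⟨H, fun k => (hH k).stronglyMeasurable, ?_⟩
  filter_upwards [hHe] with ω hω
  rw [hω, houtc]
end

section
/- Let $M$ be a convex set of equivalent probability measures, and let $A_0$ (the set of nonnegative random variables $\xi$ with $E^P\xi = 1$ for all $P \in M$) be uniformly integrable with respect to every $P \in M$. Suppose $f_N \ge 0$ is an $\mathcal{F}_N$-measurable random variable, integrable under each $P \in M$, and there exist $\alpha_0 < \infty$ and $\xi_0 \in A_0$ with $f_N \le \alpha_0 E^P[\xi_0 \mid \mathcal{F}_N]$ a.s. Define $G_{\alpha_0} = \{\alpha \in [0, \alpha_0] : \exists \xi_\alpha \in A_0, \; f_N \le \alpha E^P[\xi_\alpha \mid \mathcal{F}_N] \text{ a.s.}\}$ and $f_0 = \inf G_{\alpha_0}$. Then there exists $\zeta_0 \in A_0$ with $f_N \le f_0 E^P[\zeta_0 \mid \mathcal{F}_N]$ a.s., and consequently $f_0 \ge \sup_{P \in M} E^P f_N$. -/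
open MeasureTheory Filter Set
open scoped ENNReal Topology

namespace Stmt19Aux


variable {Ω : Type*} {m0 : MeasurableSpace Ω}

/-- From the `eLpNorm` form of uniform integrability to a set-integral bound. -/
lemma setIntegral_le_of_eLpNorm_le {Q : Measure Ω} {g : Ω → ℝ} (hg : Integrable g Q)
    (hg0 : ∀ ω, 0 ≤ g ω) {s : Set Ω} (hs : MeasurableSet s) {ε : ℝ} (hε : 0 < ε)
    (h : eLpNorm (s.indicator g) 1 Q ≤ ENNReal.ofReal ε) :
    ∫ x in s, g x ∂Q ≤ ε := by
  have h1 : ∫ x in s, g x ∂Q = ∫ x, s.indicator g x ∂Q := (integral_indicator hs).symm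
  have hind : ∀ x, 0 ≤ s.indicator g x := fun x => Set.indicator_nonneg (fun y _ => hg0 y) x
  have hmeas : AEStronglyMeasurable (s.indicator g) Q := hg.aestronglyMeasurable.indicator hs
  have h2 : ∫ x, s.indicator g x ∂Q = (∫⁻ x, ENNReal.ofReal (s.indicator g x) ∂Q).toReal :=
    integral_eq_lintegral_of_nonneg_ae (ae_of_all _ hind) hmeas
  have h3 : (∫⁻ x, ENNReal.ofReal (s.indicator g x) ∂Q) = eLpNorm (s.indicator g) 1 Q := by
    rw [eLpNorm_one_eq_lintegral_enorm]
    refine lintegral_congr fun x => ?_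
    rw [Real.enorm_eq_ofReal (hind x)]
  rw [h1, h2, h3]
  exact ENNReal.toReal_le_of_le_ofReal hε.le h

/-- Radon-Nikodym derivative bound. -/
lemma rnDeriv_le_two {Q μ : Measure Ω} [IsFiniteMeasure Q] [SigmaFinite μ]
    (h : Q ≤ μ + μ) : Q.rnDeriv μ ≤ᵐ[μ] 2 := by
  refine ae_le_of_forall_setLIntegral_le_of_sigmaFinite (Q.measurable_rnDeriv μ)
    fun s hs _ => ?_
  calc ∫⁻ x in s, Q.rnDeriv μ x ∂μ ≤ Q s := Measure.setLIntegral_rnDeriv_le s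
    _ ≤ (μ + μ) s := h s
    _ = ∫⁻ _x in s, (2 : ℝ≥0∞) ∂μ := by
        simp [Measure.add_apply, two_mul, setLIntegral_const]



variable {Ω : Type*} {m0 : MeasurableSpace Ω}

/-- The ultrafilter limit of the set integrals of a uniformly integrable sequence of
nonnegative functions defines a (finite) measure. -/
lemma exists_limit_measure (Q : Measure Ω) [IsProbabilityMeasure Q]
    (𝒰 : Ultrafilter ℕ) (ξ : ℕ → Ω → ℝ)
    (hpos : ∀ n ω, 0 ≤ ξ n ω) (hint : ∀ n, Integrable (ξ n) Q)
    (hone : ∀ n, ∫ ω, ξ n ω ∂Q ≤ 1)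
    (hui : ∀ ε : ℝ, 0 < ε → ∃ δ : ℝ, 0 < δ ∧ ∀ n (s : Set Ω), MeasurableSet s →
      Q s ≤ ENNReal.ofReal δ → ∫ x in s, ξ n x ∂Q ≤ ε) :
    ∃ (ν : Measure Ω) (L : Set Ω → ℝ),
      (∀ A : Set Ω, MeasurableSet A → ν A = ENNReal.ofReal (L A)) ∧
      (∀ A : Set Ω, 0 ≤ L A) ∧
      (∀ A : Set Ω, Tendsto (fun n => ∫ x in A, ξ n x ∂Q) (𝒰 : Filter ℕ) (𝓝 (L A))) := by
  have hbdd : ∀ (n : ℕ) (A : Set Ω), ∫ x in A, ξ n x ∂Q ∈ Icc (0 : ℝ) 1 := fun n A =>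
    ⟨integral_nonneg fun ω => hpos n ω,
      le_trans (integral_mono_measure Measure.restrict_le_self
        (ae_of_all _ (hpos n)) (hint n)) (hone n)⟩
  have hex : ∀ A : Set Ω, ∃ l : ℝ, l ∈ Icc (0 : ℝ) 1 ∧
      Tendsto (fun n => ∫ x in A, ξ n x ∂Q) (𝒰 : Filter ℕ) (𝓝 l) := by
    intro A
    obtain ⟨l, hl, hconv⟩ := (isCompact_Icc (a := (0 : ℝ)) (b := 1)).ultrafilter_le_nhds
      (𝒰.map fun n => ∫ x in A, ξ n x ∂Q)
      (by
        rw [Ultrafilter.coe_map, le_principal_iff, mem_map]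
        exact univ_mem' fun n => hbdd n A)
    exact ⟨l, hl, hconv⟩
  choose L hL0 hLt using hex
  -- countable additivity
  have hadd : ∀ f : ℕ → Set Ω, (∀ i, MeasurableSet (f i)) → Pairwise (Function.onFun Disjoint f) →
      HasSum (fun i => L (f i)) (L (⋃ i, f i)) := by
    intro f hfm hfd
    have hsum : ∀ n, HasSum (fun i => ∫ x in f i, ξ n x ∂Q) (∫ x in ⋃ i, f i, ξ n x ∂Q) :=
      fun n => hasSum_integral_iUnion hfm hfd (hint n).integrableOn
    set B : ℕ → Set Ω := fun m => ⋃ i, f (i + m) with hB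
    have hBm : ∀ m, MeasurableSet (B m) := fun m => MeasurableSet.iUnion fun i => hfm _
    have hkey : ∀ m, L (⋃ i, f i) = (∑ i ∈ Finset.range m, L (f i)) + L (B m) := by
      intro m
      refine tendsto_nhds_unique (hLt _) ?_
      have h1 : Tendsto (fun n => ∑ i ∈ Finset.range m, ∫ x in f i, ξ n x ∂Q)
          (𝒰 : Filter ℕ) (𝓝 (∑ i ∈ Finset.range m, L (f i))) :=
        tendsto_finset_sum _ fun i _ => hLt (f i)
      have h2 := hLt (B m)
      have heq : ∀ n, ∫ x in ⋃ i, f i, ξ n x ∂Q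
          = (∑ i ∈ Finset.range m, ∫ x in f i, ξ n x ∂Q) + ∫ x in B m, ξ n x ∂Q := by
        intro n
        have hs := hsum n
        have hsm : HasSum (fun i => ∫ x in f (i + m), ξ n x ∂Q) (∫ x in B m, ξ n x ∂Q) :=
          hasSum_integral_iUnion (fun i => hfm _)
            (fun i j hij => hfd (by omega)) (hint n).integrableOn
        rw [← hs.tsum_eq, ← hsm.tsum_eq, Summable.sum_add_tsum_nat_add m hs.summable]
      exact Tendsto.congr (fun n => (heq n).symm) (h1.add h2)
    have htail : Tendsto (fun m => Q (B m)) atTop (𝓝 0) := by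
      have h0 : (⋂ m, B m) = (∅ : Set Ω) := by
        refine Set.eq_empty_iff_forall_notMem.2 fun x hx => ?_
        rw [Set.mem_iInter] at hx
        obtain ⟨i, hi⟩ := Set.mem_iUnion.1 (hx 0)
        obtain ⟨j, hj⟩ := Set.mem_iUnion.1 (hx (i + 1))
        have hne : i + 0 ≠ j + (i + 1) := by omega
        exact Set.disjoint_left.1 (hfd hne) hi hj
      have ha : Antitone B := by
        intro a b hab
        refine Set.iUnion_subset fun i x hx => ?_
        refine Set.mem_iUnion.2 ⟨i + b - a, ?_⟩
        rwa [Nat.sub_add_cancel (le_trans hab (Nat.le_add_left b i))]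
      have := tendsto_measure_iInter_atTop (μ := Q)
        (fun m => (hBm m).nullMeasurableSet) ha ⟨0, measure_ne_top Q _⟩
      rw [h0] at this
      simpa [Function.comp_def] using this
    have hconv : Tendsto (fun m => ∑ i ∈ Finset.range m, L (f i)) atTop (𝓝 (L (⋃ i, f i))) := by
      rw [Metric.tendsto_atTop]
      intro ε hε
      obtain ⟨δ, hδ, hδ'⟩ := hui (ε / 2) (by positivity)
      have hev : ∀ᶠ m in atTop, Q (B m) < ENNReal.ofReal δ :=
        htail.eventually_lt_const (by simpa using hδ)
      obtain ⟨m₀, hm₀⟩ := eventually_atTop.1 hev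
      refine ⟨m₀, fun m hm => ?_⟩
      have hLB : L (B m) ≤ ε / 2 :=
        le_of_tendsto (hLt (B m))
          (Eventually.of_forall fun n => hδ' n (B m) (hBm m) (hm₀ m hm).le)
      have h0B : 0 ≤ L (B m) := (hL0 _).1
      rw [Real.dist_eq, hkey m]
      have : |∑ i ∈ Finset.range m, L (f i) - ((∑ i ∈ Finset.range m, L (f i)) + L (B m))|
          = L (B m) := by rw [abs_of_nonpos (by linarith)]; ring
      rw [this]
      linarith
    exact (hasSum_iff_tendsto_nat_of_nonneg (fun i => (hL0 _).1) _).2 hconv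
  have hLempty : L (∅ : Set Ω) = 0 := by
    refine tendsto_nhds_unique (hLt ∅) ?_
    simpa using (tendsto_const_nhds : Tendsto (fun _ : ℕ => (0 : ℝ)) _ (𝓝 0))
  refine ⟨Measure.ofMeasurable (fun A _ => ENNReal.ofReal (L A)) (by simp [hLempty]) ?_,
    L, ?_, fun A => (hL0 A).1, hLt⟩
  · intro f hfm hfd
    have h := hadd f hfm hfd
    show ENNReal.ofReal (L (⋃ i, f i)) = ∑' i, ENNReal.ofReal (L (f i))
    rw [← h.tsum_eq, ← ENNReal.ofReal_tsum_of_nonneg (fun i => (hL0 _).1) h.summable]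
  · intro A hA
    exact Measure.ofMeasurable_apply A hA



variable {Ω : Type*} {m0 : MeasurableSpace Ω}

lemma setIntegral_eq_mul_rnDeriv {Q μ : Measure Ω} [IsFiniteMeasure Q] [IsFiniteMeasure μ]
    (hQμ : Q ≪ μ) {z : Ω → ℝ} (hz0 : ∀ ω, 0 ≤ z ω)
    (hzae : (fun ω => ENNReal.ofReal (z ω)) =ᵐ[μ] Q.rnDeriv μ)
    {f : Ω → ℝ} (hf0 : ∀ ω, 0 ≤ f ω) (hfQ : Integrable f Q) (hfμ : Integrable f μ)
    (hfz : Integrable (fun ω => z ω * f ω) μ)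
    {A : Set Ω} (hA : MeasurableSet A) :
    ∫ x in A, f x ∂Q = ∫ x in A, z x * f x ∂μ := by
  have hL : ∫ x in A, f x ∂Q = (∫⁻ x in A, ENNReal.ofReal (f x) ∂Q).toReal :=
    integral_eq_lintegral_of_nonneg_ae (ae_of_all _ hf0) hfQ.aestronglyMeasurable.restrict
  have hR : ∫ x in A, z x * f x ∂μ = (∫⁻ x in A, ENNReal.ofReal (z x * f x) ∂μ).toReal :=
    integral_eq_lintegral_of_nonneg_ae
      (ae_of_all _ fun ω => mul_nonneg (hz0 ω) (hf0 ω)) hfz.aestronglyMeasurable.restrict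
  rw [hL, hR]
  congr 1
  have h1 : ∫⁻ x in A, ENNReal.ofReal (f x) ∂Q
      = ∫⁻ x in A, Q.rnDeriv μ x * ENNReal.ofReal (f x) ∂μ :=
    (MeasureTheory.setLIntegral_rnDeriv_mul hQμ
      (hfμ.aestronglyMeasurable.aemeasurable.ennreal_ofReal) hA).symm
  rw [h1]
  refine lintegral_congr_ae ?_
  filter_upwards [ae_restrict_of_ae hzae] with x hx
  rw [← hx, ← ENNReal.ofReal_mul (hz0 x)]

lemma rnDeriv_le_two' {Q μ : Measure Ω} [IsFiniteMeasure Q] [SigmaFinite μ]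
    (h : Q ≤ μ + μ) : Q.rnDeriv μ ≤ᵐ[μ] 2 := by
  refine ae_le_of_forall_setLIntegral_le_of_sigmaFinite (Q.measurable_rnDeriv μ)
    fun s hs _ => ?_
  calc ∫⁻ x in s, Q.rnDeriv μ x ∂μ ≤ Q s := Measure.setLIntegral_rnDeriv_le s
    _ ≤ (μ + μ) s := h s
    _ = ∫⁻ _x in s, (2 : ℝ≥0∞) ∂μ := by
        simp [Measure.add_apply, two_mul, setLIntegral_const]

/-- The transfer lemma: if the set integrals of `ξ n` converge (along an ultrafilter) both
under `μ` (to the set integrals of `h`) and under `Q` (to `LQ`), where `Q ≪ μ` with density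
bounded by 2, then `LQ A = ∫_A h dQ`. -/
lemma transfer {μ Q : Measure Ω} [IsProbabilityMeasure μ] [IsProbabilityMeasure Q]
    (hQμ : Q ≪ μ) (hb : Q ≤ μ + μ) (𝒰 : Ultrafilter ℕ) {ξ : ℕ → Ω → ℝ}
    (hpos : ∀ n ω, 0 ≤ ξ n ω) (hintμ : ∀ n, Integrable (ξ n) μ)
    (honeμ : ∀ n, ∫ ω, ξ n ω ∂μ ≤ 1) (hintQ : ∀ n, Integrable (ξ n) Q)
    {h : Ω → ℝ} (hh : Integrable h μ) (hh0 : ∀ ω, 0 ≤ h ω) (hhm : Measurable h)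
    {LQ : Set Ω → ℝ}
    (hμlim : ∀ A : Set Ω, MeasurableSet A →
      Tendsto (fun n => ∫ x in A, ξ n x ∂μ) (𝒰 : Filter ℕ) (𝓝 (∫ x in A, h x ∂μ)))
    (hQlim : ∀ A : Set Ω, MeasurableSet A →
      Tendsto (fun n => ∫ x in A, ξ n x ∂Q) (𝒰 : Filter ℕ) (𝓝 (LQ A)))
    {A : Set Ω} (hA : MeasurableSet A) : LQ A = ∫ x in A, h x ∂Q := by
  classical
  set z : Ω → ℝ := fun ω => min ((Q.rnDeriv μ ω).toReal) 2 with hzdef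
  have hzm : Measurable z := (Measure.measurable_rnDeriv Q μ).ennreal_toReal.min measurable_const
  have hz0 : ∀ ω, 0 ≤ z ω := fun ω => le_min ENNReal.toReal_nonneg (by norm_num)
  have hz2 : ∀ ω, z ω ≤ 2 := fun ω => min_le_right _ _
  have hzae : (fun ω => ENNReal.ofReal (z ω)) =ᵐ[μ] Q.rnDeriv μ := by
    filter_upwards [rnDeriv_le_two' hb, Q.rnDeriv_lt_top μ] with ω h2 hfin
    have htr : (Q.rnDeriv μ ω).toReal ≤ 2 := by
      have := ENNReal.toReal_mono (by norm_num : (2 : ℝ≥0∞) ≠ ⊤) h2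
      simpa using this
    simp only [hzdef]
    rw [min_eq_left htr, ENNReal.ofReal_toReal hfin.ne]
  -- integrability of the products
  have hmul : ∀ n, Integrable (fun x => z x * ξ n x) μ := fun n =>
    (hintμ n).bdd_mul hzm.aestronglyMeasurable
      (ae_of_all _ fun ω => by rw [Real.norm_of_nonneg (hz0 ω)]; exact hz2 ω)
  have hmulh : Integrable (fun x => z x * h x) μ :=
    hh.bdd_mul hzm.aestronglyMeasurable
      (ae_of_all _ fun ω => by rw [Real.norm_of_nonneg (hz0 ω)]; exact hz2 ω)
  have hhQ : Integrable h Q := (hh.add_measure hh).mono_measure hb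
  -- key identity for ξ n
  have hQint : ∀ n, ∫ x in A, ξ n x ∂Q = ∫ x in A, z x * ξ n x ∂μ := fun n =>
    setIntegral_eq_mul_rnDeriv hQμ hz0 hzae (hpos n) (hintQ n) (hintμ n) (hmul n) hA
  have hQinth : ∫ x in A, h x ∂Q = ∫ x in A, z x * h x ∂μ :=
    setIntegral_eq_mul_rnDeriv hQμ hz0 hzae hh0 hhQ hh hmulh hA
  -- approximation by staircase functions
  have key : ∀ m : ℕ, |LQ A - ∫ x in A, z x * h x ∂μ|
      ≤ (1 + ∫ x, h x ∂μ) * ((2 : ℝ) ^ m)⁻¹ := by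
    intro m
    have hc0 : (0:ℝ) < ((2 : ℝ) ^ m)⁻¹ := by positivity
    set c : ℝ := ((2 : ℝ) ^ m)⁻¹ with hcdef
    set φ : Ω → ℝ := fun ω => (⌊z ω * 2 ^ m⌋₊ : ℝ) * c with hφdef
    have hφm : Measurable φ := by
      have h1 : Measurable fun ω => ⌊z ω * 2 ^ m⌋₊ := (hzm.mul_const _).nat_floor
      exact ((measurable_from_top (f := (Nat.cast : ℕ → ℝ))).comp h1).mul_const c
    have hφ0 : ∀ ω, 0 ≤ φ ω := fun ω => mul_nonneg (Nat.cast_nonneg _) hc0.le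
    have hbase : ∀ ω, 0 ≤ z ω * 2 ^ m := fun ω => mul_nonneg (hz0 ω) (by positivity)
    have hzc : ∀ ω, z ω = (z ω * 2 ^ m) * c := by
      intro ω
      rw [hcdef, mul_assoc, mul_inv_cancel₀ (by positivity), mul_one]
    have hφle : ∀ ω, φ ω ≤ z ω := fun ω => by
      rw [hzc ω]
      exact mul_le_mul_of_nonneg_right (Nat.floor_le (hbase ω)) hc0.le
    have hφgt : ∀ ω, z ω - c ≤ φ ω := fun ω => by
      rw [hzc ω]
      have h2 : z ω * 2 ^ m ≤ (⌊z ω * 2 ^ m⌋₊ : ℝ) + 1 := (Nat.lt_floor_add_one _).le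
      have h3 := mul_le_mul_of_nonneg_right h2 hc0.le
      rw [add_mul, one_mul] at h3
      simp only [hφdef]
      linarith
    set J : Finset ℕ := Finset.range (2 ^ (m + 1) + 1) with hJ
    set E : ℕ → Set Ω := fun j => (fun ω => ⌊z ω * 2 ^ m⌋₊) ⁻¹' {j} with hE
    have hEm : ∀ j, MeasurableSet (E j) :=
      fun j => (hzm.mul_const _).nat_floor (measurableSet_singleton j)
    have hmemJ : ∀ ω, ⌊z ω * 2 ^ m⌋₊ ∈ J := by
      intro ω
      rw [hJ, Finset.mem_range]
      have h1 : ⌊z ω * 2 ^ m⌋₊ ≤ ⌊(2 : ℝ) * 2 ^ m⌋₊ :=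
        Nat.floor_le_floor (mul_le_mul_of_nonneg_right (hz2 ω) (by positivity))
      have h2 : ⌊(2 : ℝ) * 2 ^ m⌋₊ = 2 ^ (m + 1) := by
        rw [show ((2 : ℝ) * 2 ^ m) = ((2 ^ (m + 1) : ℕ) : ℝ) by push_cast; ring,
          Nat.floor_natCast]
      omega
    have hdecomp : ∀ (f : Ω → ℝ) (x : Ω),
        f x * φ x = ∑ j ∈ J, (E j).indicator (fun y => ((j : ℝ) * c) * f y) x := by
      intro f x
      rw [Finset.sum_eq_single_of_mem (⌊z x * 2 ^ m⌋₊) (hmemJ x) ?_]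
      · rw [Set.indicator_of_mem (show x ∈ E _ from rfl)]
        simp only [hφdef]; ring
      · intro b _ hbne
        refine Set.indicator_of_notMem (fun hmem => hbne ?_) _
        exact (Set.mem_preimage.1 hmem).symm
    have hsum : ∀ (f : Ω → ℝ), Integrable f μ →
        ∫ x in A, f x * φ x ∂μ = ∑ j ∈ J, ((j : ℝ) * c) * ∫ x in A ∩ E j, f x ∂μ := by
      intro f hf
      rw [show (fun x => f x * φ x)
          = fun x => ∑ j ∈ J, (E j).indicator (fun y => ((j : ℝ) * c) * f y) x
        from funext (hdecomp f)]
      rw [integral_finset_sum J (fun j _ => ((hf.const_mul _).indicator (hEm j)).integrableOn)]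
      refine Finset.sum_congr rfl fun j _ => ?_
      rw [setIntegral_indicator (hEm j), integral_const_mul]
    have hmulφ : ∀ n, Integrable (fun x => ξ n x * φ x) μ := by
      intro n
      have := (hintμ n).bdd_mul hφm.aestronglyMeasurable
        (ae_of_all _ fun ω => by
          rw [Real.norm_of_nonneg (hφ0 ω)]; exact le_trans (hφle ω) (hz2 ω))
      exact this.congr (ae_of_all _ fun x => mul_comm _ _)
    have hmulφh : Integrable (fun x => h x * φ x) μ := by
      have := hh.bdd_mul hφm.aestronglyMeasurable
        (ae_of_all _ fun ω => by
          rw [Real.norm_of_nonneg (hφ0 ω)]; exact le_trans (hφle ω) (hz2 ω))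
      exact this.congr (ae_of_all _ fun x => mul_comm _ _)
    have hφlim : Tendsto (fun n => ∫ x in A, ξ n x * φ x ∂μ) (𝒰 : Filter ℕ)
        (𝓝 (∫ x in A, h x * φ x ∂μ)) := by
      rw [hsum h hh]
      have hts := tendsto_finset_sum J
        (fun j _ => ((hμlim (A ∩ E j) (hA.inter (hEm j))).const_mul ((j : ℝ) * c)))
      exact Tendsto.congr (fun n => (hsum (ξ n) (hintμ n)).symm) hts
    have herr1 : ∀ n, |∫ x in A, ξ n x ∂Q - ∫ x in A, ξ n x * φ x ∂μ| ≤ c := by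
      intro n
      rw [hQint n, ← integral_sub (hmul n).integrableOn (hmulφ n).integrableOn]
      have hnn : ∀ x, 0 ≤ z x * ξ n x - ξ n x * φ x := fun x => by
        have h1 := hφle x
        nlinarith [hpos n x]
      rw [abs_of_nonneg (integral_nonneg fun x => hnn x)]
      have hle : ∀ x, z x * ξ n x - ξ n x * φ x ≤ c * ξ n x := fun x => by
        have h1 := hφgt x
        nlinarith [hpos n x]
      calc ∫ x in A, (z x * ξ n x - ξ n x * φ x) ∂μ
          ≤ ∫ x in A, c * ξ n x ∂μ :=
            integral_mono ((hmul n).integrableOn.sub (hmulφ n).integrableOn)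
              ((hintμ n).const_mul c).integrableOn hle
        _ = c * ∫ x in A, ξ n x ∂μ := integral_const_mul _ _
        _ ≤ c * 1 := by
            refine mul_le_mul_of_nonneg_left ?_ hc0.le
            exact (integral_mono_measure Measure.restrict_le_self
              (ae_of_all _ (hpos n)) (hintμ n)).trans (honeμ n)
        _ = c := mul_one c
    have herr2 : |∫ x in A, z x * h x ∂μ - ∫ x in A, h x * φ x ∂μ| ≤ c * ∫ x, h x ∂μ := by
      rw [← integral_sub hmulh.integrableOn hmulφh.integrableOn]
      have hnn : ∀ x, 0 ≤ z x * h x - h x * φ x := fun x => by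
        have h1 := hφle x
        nlinarith [hh0 x]
      rw [abs_of_nonneg (integral_nonneg fun x => hnn x)]
      have hle : ∀ x, z x * h x - h x * φ x ≤ c * h x := fun x => by
        have h1 := hφgt x
        nlinarith [hh0 x]
      calc ∫ x in A, (z x * h x - h x * φ x) ∂μ
          ≤ ∫ x in A, c * h x ∂μ :=
            integral_mono (hmulh.integrableOn.sub hmulφh.integrableOn)
              (hh.const_mul c).integrableOn hle
        _ = c * ∫ x in A, h x ∂μ := integral_const_mul _ _
        _ ≤ c * ∫ x, h x ∂μ := by
            refine mul_le_mul_of_nonneg_left ?_ hc0.le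
            exact integral_mono_measure Measure.restrict_le_self (ae_of_all _ hh0) hh
    have h3 : |LQ A - ∫ x in A, h x * φ x ∂μ| ≤ c := by
      have hlim2 : Tendsto (fun n => ∫ x in A, ξ n x ∂Q - ∫ x in A, ξ n x * φ x ∂μ)
          (𝒰 : Filter ℕ) (𝓝 (LQ A - ∫ x in A, h x * φ x ∂μ)) := (hQlim A hA).sub hφlim
      exact le_of_tendsto hlim2.abs (Eventually.of_forall herr1)
    calc |LQ A - ∫ x in A, z x * h x ∂μ|
        ≤ |LQ A - ∫ x in A, h x * φ x ∂μ|
          + |∫ x in A, h x * φ x ∂μ - ∫ x in A, z x * h x ∂μ| := abs_sub_le _ _ _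
      _ ≤ c + c * ∫ x, h x ∂μ := add_le_add h3 (by rw [abs_sub_comm]; exact herr2)
      _ = (1 + ∫ x, h x ∂μ) * c := by ring
  have hzh : LQ A = ∫ x in A, z x * h x ∂μ := by
    have h0 : Tendsto (fun m : ℕ => (1 + ∫ x, h x ∂μ) * ((2 : ℝ) ^ m)⁻¹) atTop (𝓝 0) := by
      have h1 : Tendsto (fun m : ℕ => ((2 : ℝ) ^ m)⁻¹) atTop (𝓝 0) := by
        have := tendsto_pow_atTop_nhds_zero_of_abs_lt_one
          (show |(2 : ℝ)⁻¹| < 1 by rw [abs_of_pos]; norm_num; norm_num)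
        simpa [inv_pow] using this
      simpa using h1.const_mul ((1 : ℝ) + ∫ x, h x ∂μ)
    have habs : |LQ A - ∫ x in A, z x * h x ∂μ| ≤ 0 :=
      ge_of_tendsto h0 (Eventually.of_forall key)
    have := abs_nonpos_iff.mp habs
    linarith [sub_eq_zero.1 this]
  rw [hQinth]
  exact hzh

end Stmt19Aux

/-- Existence of a fair price. Let `A₀` be the (uniformly integrable) set
of nonnegative random variables with unit expectation under every `P ∈ M`. If the
nonnegative `ℱ N`-measurable contingent claim `f_N` satisfies
`f_N ≤ α₀ E^P[ξ₀ | ℱ N]` a.s. for some `ξ₀ ∈ A₀` and `α₀ < ∞`, then for the fair price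
`f₀ = inf {α ∈ [0, α₀] | ∃ ξ_α ∈ A₀, f_N ≤ α E^P[ξ_α | ℱ N] a.s.}` there exists
`ζ₀ ∈ A₀` with `f_N ≤ f₀ E^P[ζ₀ | ℱ N]` a.s., and consequently
`E^P f_N ≤ f₀` for every `P ∈ M`. -/
theorem stmt19
    {Ω : Type*} {m0 : MeasurableSpace Ω} (ℱ : Filtration ℕ m0)
    (M : Set (Measure Ω))
    (hprob : ∀ P ∈ M, IsProbabilityMeasure P)
    (hconvex : ∀ P ∈ M, ∀ Q ∈ M, ∀ α : ℝ, 0 ≤ α → α ≤ 1 →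
      (ENNReal.ofReal (1 - α)) • P + (ENNReal.ofReal α) • Q ∈ M)
    (hequiv : ∀ P ∈ M, ∀ Q ∈ M, P ≪ Q)
    (A₀ : Set (Ω → ℝ))
    (hA₀ : A₀ = {ξ : Ω → ℝ | (∀ ω, 0 ≤ ξ ω) ∧
      ∀ P ∈ M, Integrable ξ P ∧ ∫ ω, ξ ω ∂P = 1})
    (hUI : ∀ P ∈ M, UnifIntegrable (fun ξ : A₀ => (ξ : Ω → ℝ)) 1 P)
    (Nn : ℕ) (fN : Ω → ℝ)
    (hfN0 : ∀ ω, 0 ≤ fN ω)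
    (hfNmeas : StronglyMeasurable[ℱ Nn] fN)
    (hfNint : ∀ P ∈ M, Integrable fN P)
    (α₀ : ℝ) (hα₀ : 0 ≤ α₀) (ξ₀ : Ω → ℝ) (hξ₀ : ξ₀ ∈ A₀)
    (hdom : ∀ P ∈ M, ∀ᵐ ω ∂P, fN ω ≤ α₀ * (P[ξ₀ | ℱ Nn]) ω) :
    (∃ ζ₀ ∈ A₀, ∀ P ∈ M, ∀ᵐ ω ∂P,
      fN ω ≤
        (sInf {α : ℝ | α ∈ Set.Icc 0 α₀ ∧ ∃ ξ ∈ A₀,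
            ∀ P' ∈ M, ∀ᵐ ω' ∂P', fN ω' ≤ α * (P'[ξ | ℱ Nn]) ω'}) *
          (P[ζ₀ | ℱ Nn]) ω) ∧
    (∀ P ∈ M, ∫ ω, fN ω ∂P ≤
      sInf {α : ℝ | α ∈ Set.Icc 0 α₀ ∧ ∃ ξ ∈ A₀,
        ∀ P' ∈ M, ∀ᵐ ω' ∂P', fN ω' ≤ α * (P'[ξ | ℱ Nn]) ω'}) := by
  classical
  set G : Set ℝ := {α : ℝ | α ∈ Set.Icc 0 α₀ ∧ ∃ ξ ∈ A₀,
            ∀ P' ∈ M, ∀ᵐ ω' ∂P', fN ω' ≤ α * (P'[ξ | ℱ Nn]) ω'} with hGdef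
  have hA₀mem : ∀ ξ', ξ' ∈ A₀ →
      (∀ ω, 0 ≤ ξ' ω) ∧ ∀ P ∈ M, Integrable ξ' P ∧ ∫ ω, ξ' ω ∂P = 1 := by
    intro ξ' hξ'; rwa [hA₀] at hξ'
  have hα₀G : α₀ ∈ G := ⟨⟨hα₀, le_refl _⟩, ξ₀, hξ₀, hdom⟩
  have hGne : G.Nonempty := ⟨α₀, hα₀G⟩
  have hGbdd : BddBelow G := ⟨0, fun b hb => hb.1.1⟩
  set S := sInf G with hSdef
  have hm : ℱ Nn ≤ m0 := ℱ.le Nn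
  -- Part 2
  have part2 : ∀ P ∈ M, ∫ ω, fN ω ∂P ≤ S := by
    intro P hP
    haveI := hprob P hP
    refine le_csInf hGne fun b hb => ?_
    obtain ⟨⟨hb0, -⟩, ξ, hξA, hineq⟩ := hb
    have hint := (hA₀mem ξ hξA).2 P hP
    calc ∫ ω, fN ω ∂P ≤ ∫ ω, b * (P[ξ|ℱ Nn]) ω ∂P :=
        integral_mono_ae (hfNint P hP) (integrable_condExp.const_mul b) (hineq P hP)
      _ = b * ∫ ω, (P[ξ|ℱ Nn]) ω ∂P := integral_const_mul _ _
      _ = b * ∫ ω, ξ ω ∂P := by rw [integral_condExp hm]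
      _ = b := by rw [hint.2, mul_one]
  rcases Set.eq_empty_or_nonempty M with hM | ⟨Pb, hPb⟩
  · exact ⟨⟨ξ₀, hξ₀, fun P hP => absurd hP (by simp [hM])⟩, part2⟩
  -- Main case
  obtain ⟨u, -, huS, huG⟩ := exists_seq_tendsto_sInf hGne hGbdd
  have hexw : ∀ n, ∃ ξ', ξ' ∈ A₀ ∧
      ∀ P ∈ M, ∀ᵐ ω ∂P, fN ω ≤ u n * (P[ξ'|ℱ Nn]) ω := by
    intro n
    obtain ⟨-, ξ', hξ'A, hineq⟩ := huG n
    exact ⟨ξ', hξ'A, hineq⟩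
  choose ξs hξsA hξsineq using hexw
  set 𝒰 : Ultrafilter ℕ := Ultrafilter.of atTop with h𝒰
  have h𝒰le : (𝒰 : Filter ℕ) ≤ atTop := Ultrafilter.of_le _
  have hui' : ∀ Q ∈ M, ∀ ε : ℝ, 0 < ε → ∃ δ : ℝ, 0 < δ ∧ ∀ (n : ℕ) (s : Set Ω),
      MeasurableSet s → Q s ≤ ENNReal.ofReal δ → ∫ x in s, ξs n x ∂Q ≤ ε := by
    intro Q hQ ε hε
    obtain ⟨δ, hδ, hδ'⟩ := hUI Q hQ hε
    refine ⟨δ, hδ, fun n s hs hQs => ?_⟩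
    exact Stmt19Aux.setIntegral_le_of_eLpNorm_le ((hA₀mem _ (hξsA n)).2 Q hQ).1
      (hA₀mem _ (hξsA n)).1 hs hε (hδ' ⟨ξs n, hξsA n⟩ s hs hQs)
  have hνex : ∀ Q : Measure Ω, Q ∈ M → ∃ (ν : Measure Ω) (L : Set Ω → ℝ),
      (∀ A : Set Ω, MeasurableSet A → ν A = ENNReal.ofReal (L A)) ∧
      (∀ A : Set Ω, 0 ≤ L A) ∧
      (∀ A : Set Ω, Filter.Tendsto (fun n => ∫ x in A, ξs n x ∂Q)
        (𝒰 : Filter ℕ) (𝓝 (L A))) := by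
    intro Q hQ
    haveI := hprob Q hQ
    exact Stmt19Aux.exists_limit_measure Q 𝒰 ξs (fun n => (hA₀mem _ (hξsA n)).1)
      (fun n => ((hA₀mem _ (hξsA n)).2 Q hQ).1)
      (fun n => le_of_eq ((hA₀mem _ (hξsA n)).2 Q hQ).2) (hui' Q hQ)
  choose! ν L hνL hL0 hLlim using hνex
  have hLuniv : ∀ Q, Q ∈ M → L Q Set.univ = 1 := by
    intro Q hQ
    haveI := hprob Q hQ
    refine tendsto_nhds_unique (hLlim Q hQ Set.univ) ?_
    have h1 : ∀ n, ∫ x in Set.univ, ξs n x ∂Q = 1 := fun n => by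
      rw [setIntegral_univ]
      exact ((hA₀mem _ (hξsA n)).2 Q hQ).2
    rw [show (fun n => ∫ x in Set.univ, ξs n x ∂Q) = fun _ => (1 : ℝ) from funext h1]
    exact tendsto_const_nhds
  have hνfin : ∀ Q, Q ∈ M → IsFiniteMeasure (ν Q) := by
    intro Q hQ
    constructor
    rw [hνL Q hQ Set.univ MeasurableSet.univ]
    exact ENNReal.ofReal_lt_top
  have hνac : ∀ Q, Q ∈ M → ν Q ≪ Q := by
    intro Q hQ
    refine Measure.AbsolutelyContinuous.mk fun A hA hQA => ?_
    rw [hνL Q hQ A hA]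
    have h0 : ∀ n, ∫ x in A, ξs n x ∂Q = 0 := fun n => by
      rw [Measure.restrict_eq_zero.2 hQA, integral_zero_measure]
    have h1 := tendsto_nhds_unique (hLlim Q hQ A)
      (by rw [show (fun n => ∫ x in A, ξs n x ∂Q) = fun _ => (0 : ℝ) from funext h0]
          exact tendsto_const_nhds)
    rw [h1, ENNReal.ofReal_zero]
  set hfun : Measure Ω → Ω → ℝ := fun Q ω => ((ν Q).rnDeriv Q ω).toReal with hfundef
  have hfm : ∀ Q, Measurable (hfun Q) := fun Q =>
    (Measure.measurable_rnDeriv _ _).ennreal_toReal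
  have hf0 : ∀ Q ω, 0 ≤ hfun Q ω := fun Q ω => ENNReal.toReal_nonneg
  have hfint : ∀ Q, Q ∈ M → Integrable (hfun Q) Q := by
    intro Q hQ
    haveI := hprob Q hQ
    haveI := hνfin Q hQ
    exact Measure.integrable_toReal_rnDeriv
  have hfset : ∀ Q, Q ∈ M → ∀ A : Set Ω, MeasurableSet A →
      ∫ x in A, hfun Q x ∂Q = L Q A := by
    intro Q hQ A hA
    haveI := hprob Q hQ
    haveI := hνfin Q hQ
    rw [hfundef]
    rw [Measure.setIntegral_toReal_rnDeriv (hνac Q hQ) A, measureReal_def, hνL Q hQ A hA,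
      ENNReal.toReal_ofReal (hL0 Q hQ A)]
  have hmix : ∀ Q, Q ∈ M → ∃ ρ, ρ ∈ M ∧ Pb + Q = ρ + ρ := by
    intro Q hQ
    refine ⟨_, hconvex Pb hPb Q hQ 2⁻¹ (by norm_num) (by norm_num), ?_⟩
    have h1 : ENNReal.ofReal (1 - 2⁻¹ : ℝ) = 2⁻¹ := by
      rw [show (1 - 2⁻¹ : ℝ) = 2⁻¹ by norm_num,
        ENNReal.ofReal_inv_of_pos (by norm_num), ENNReal.ofReal_ofNat]
    have h2 : ENNReal.ofReal (2⁻¹ : ℝ) = 2⁻¹ := by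
      rw [ENNReal.ofReal_inv_of_pos (by norm_num), ENNReal.ofReal_ofNat]
    rw [h1, h2]
    have h3 : ((2:ℝ≥0∞)⁻¹ • Pb + (2:ℝ≥0∞)⁻¹ • Q) + ((2:ℝ≥0∞)⁻¹ • Pb + (2:ℝ≥0∞)⁻¹ • Q)
        = ((2:ℝ≥0∞)⁻¹ • Pb + (2:ℝ≥0∞)⁻¹ • Pb) + ((2:ℝ≥0∞)⁻¹ • Q + (2:ℝ≥0∞)⁻¹ • Q) := by
      abel
    rw [h3, ← add_smul, ← add_smul, ENNReal.inv_two_add_inv_two, one_smul, one_smul]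
  have htrans : ∀ Q, Q ∈ M → Integrable (hfun Pb) Q ∧
      ∀ A : Set Ω, MeasurableSet A → L Q A = ∫ x in A, hfun Pb x ∂Q := by
    intro Q hQ
    obtain ⟨ρ, hρM, hρeq⟩ := hmix Q hQ
    haveI := hprob Q hQ
    haveI := hprob Pb hPb
    haveI := hprob ρ hρM
    have hμlim : ∀ A : Set Ω, MeasurableSet A →
        Filter.Tendsto (fun n => ∫ x in A, ξs n x ∂ρ) (𝒰 : Filter ℕ)
          (𝓝 (∫ x in A, hfun ρ x ∂ρ)) := by
      intro A hA
      rw [hfset ρ hρM A hA]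
      exact hLlim ρ hρM A
    have hQle : Q ≤ ρ + ρ := by rw [← hρeq]; exact Measure.le_add_left le_rfl
    have hPble : Pb ≤ ρ + ρ := by rw [← hρeq]; exact Measure.le_add_right le_rfl
    have hQt : ∀ A : Set Ω, MeasurableSet A → L Q A = ∫ x in A, hfun ρ x ∂Q :=
      fun A hA => Stmt19Aux.transfer (hequiv Q hQ ρ hρM) hQle 𝒰
        (fun n => (hA₀mem _ (hξsA n)).1) (fun n => ((hA₀mem _ (hξsA n)).2 ρ hρM).1)
        (fun n => le_of_eq ((hA₀mem _ (hξsA n)).2 ρ hρM).2)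
        (fun n => ((hA₀mem _ (hξsA n)).2 Q hQ).1)
        (hfint ρ hρM) (hf0 ρ) (hfm ρ) hμlim (fun A' hA' => hLlim Q hQ A') hA
    have hPt : ∀ A : Set Ω, MeasurableSet A → L Pb A = ∫ x in A, hfun ρ x ∂Pb :=
      fun A hA => Stmt19Aux.transfer (hequiv Pb hPb ρ hρM) hPble 𝒰
        (fun n => (hA₀mem _ (hξsA n)).1) (fun n => ((hA₀mem _ (hξsA n)).2 ρ hρM).1)
        (fun n => le_of_eq ((hA₀mem _ (hξsA n)).2 ρ hρM).2)
        (fun n => ((hA₀mem _ (hξsA n)).2 Pb hPb).1)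
        (hfint ρ hρM) (hf0 ρ) (hfm ρ) hμlim (fun A' hA' => hLlim Pb hPb A') hA
    have hρQint : Integrable (hfun ρ) Q :=
      ((hfint ρ hρM).add_measure (hfint ρ hρM)).mono_measure hQle
    have hρPbint : Integrable (hfun ρ) Pb :=
      ((hfint ρ hρM).add_measure (hfint ρ hρM)).mono_measure hPble
    have hae : hfun ρ =ᵐ[Pb] hfun Pb := by
      refine Integrable.ae_eq_of_forall_setIntegral_eq _ _ hρPbint (hfint Pb hPb) ?_
      intro s hs _
      rw [← hPt s hs, hfset Pb hPb s hs]
    have haeQ : hfun ρ =ᵐ[Q] hfun Pb := (hequiv Q hQ Pb hPb).ae_eq hae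
    constructor
    · exact hρQint.congr haeQ
    · intro A hA
      rw [hQt A hA]
      refine setIntegral_congr_ae hA ?_
      exact haeQ.mono fun x hx _ => hx
  -- the density for the base measure is our witness
  have hζA₀ : hfun Pb ∈ A₀ := by
    rw [hA₀]
    refine ⟨fun ω => hf0 Pb ω, fun Q hQ => ⟨(htrans Q hQ).1, ?_⟩⟩
    rw [← setIntegral_univ, ← (htrans Q hQ).2 Set.univ MeasurableSet.univ, hLuniv Q hQ]
  have hsetineq : ∀ Q, Q ∈ M → ∀ A : Set Ω, MeasurableSet[ℱ Nn] A →
      ∫ x in A, fN x ∂Q ≤ S * ∫ x in A, hfun Pb x ∂Q := by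
    intro Q hQ A hA
    haveI := hprob Q hQ
    have hAm : MeasurableSet A := hm A hA
    have hstep : ∀ n, ∫ x in A, fN x ∂Q ≤ u n * ∫ x in A, ξs n x ∂Q := by
      intro n
      have h1 : ∫ x in A, fN x ∂Q ≤ ∫ x in A, u n * (Q[ξs n|ℱ Nn]) x ∂Q := by
        refine integral_mono_ae (hfNint Q hQ).integrableOn
          (integrable_condExp.const_mul (u n)).integrableOn ?_
        exact ae_restrict_of_ae (hξsineq n Q hQ)
      rw [integral_const_mul,
        setIntegral_condExp hm ((hA₀mem _ (hξsA n)).2 Q hQ).1 hA] at h1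
      exact h1
    have hlim : Filter.Tendsto (fun n => u n * ∫ x in A, ξs n x ∂Q) (𝒰 : Filter ℕ)
        (𝓝 (S * ∫ x in A, hfun Pb x ∂Q)) := by
      rw [← (htrans Q hQ).2 A hAm]
      exact (huS.mono_left h𝒰le).mul (hLlim Q hQ A)
    exact ge_of_tendsto hlim (Filter.Eventually.of_forall hstep)
  have hfinal : ∀ Q, Q ∈ M → ∀ᵐ ω ∂Q, fN ω ≤ S * (Q[hfun Pb|ℱ Nn]) ω := by
    intro Q hQ
    haveI := hprob Q hQ
    set g : Ω → ℝ := fun ω => S * (Q[hfun Pb|ℱ Nn]) ω with hgdef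
    have hgm : StronglyMeasurable[ℱ Nn] g := stronglyMeasurable_condExp.const_mul S
    have hgint : Integrable g Q := integrable_condExp.const_mul S
    have hle : fN ≤ᵐ[Q.trim hm] g := by
      refine ae_le_of_forall_setIntegral_le ((hfNint Q hQ).trim hm hfNmeas)
        (hgint.trim hm hgm) ?_
      intro s hs _
      rw [← setIntegral_trim hm hfNmeas hs, ← setIntegral_trim hm hgm hs]
      have h2 : ∫ x in s, g x ∂Q = S * ∫ x in s, hfun Pb x ∂Q := by
        rw [hgdef]
        rw [integral_const_mul, setIntegral_condExp hm (htrans Q hQ).1 hs]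
      rw [h2]
      exact hsetineq Q hQ s hs
    exact ae_le_of_ae_le_trim hle
  exact ⟨⟨hfun Pb, hζA₀, fun P hP => hfinal P hP⟩, part2⟩
end
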